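/- arXiv:2405.07110 — 4 statements merged into one kernel-verified Lean document; each statement's English description precedes it below -/
import Mathlib

section
/- Let n ≥ 2. The HOP distance d is a metric on the set of tree representations on {1,…,n}: for all tree representations u, v, w on {1,…,n}, (i) d(u,v) is finite; (ii) d(u,v) = d(v,u); (iii) d(u,v) = 0 if and only if u = v; and (iv) d(u,w) ≤ d(u,v) + d(v,w). -/
/-- 0-indexed position of the first occurrence of `x` in `v`. -/
def firstOcc (v : List ℕ) (x : ℕ) : ℕ := v.idxOf x
/-- 0-indexed position of the second (= last, when `x` occurs exactly twice)
occurrence of `x` in `v`. -/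
def secondOcc (v : List ℕ) (x : ℕ) : ℕ := v.length - 1 - v.reverse.idxOf x

namespace HopAux

lemma getElem_congr' {v : List ℕ} {i j : ℕ} (h : i = j) (hj : j < v.length) :
    v[i]'(h ▸ hj) = v[j] := by simp [h]

lemma secondOcc_def (v : List ℕ) (x : ℕ) :
    secondOcc v x = v.length - 1 - firstOcc v.reverse x := rfl

lemma before_firstOcc {v : List ℕ} {x q : ℕ} (hq : q < firstOcc v x) (hql : q < v.length) :
    v[q] ≠ x := by
  have := List.not_of_lt_findIdx (p := (· == x)) (xs := v) (i := q) hq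
  simpa using this

lemma firstOcc_lt_length {v : List ℕ} {x : ℕ} (h : x ∈ v) : firstOcc v x < v.length :=
  List.idxOf_lt_length_iff.2 h

lemma getElem_firstOcc {v : List ℕ} {x : ℕ} (h : x ∈ v) :
    v[firstOcc v x]'(firstOcc_lt_length h) = x :=
  List.getElem_idxOf (firstOcc_lt_length h)

lemma firstOcc_le {v : List ℕ} {x p : ℕ} (hp : p < v.length) (hx : v[p] = x) :
    firstOcc v x ≤ p := by
  by_contra h
  exact before_firstOcc (by omega) hp hx

lemma firstOcc_eq {v : List ℕ} {x p : ℕ} (hp : p < v.length) (hx : v[p] = x)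
    (hb : ∀ q (hq : q < p), v[q]'(hq.trans hp) ≠ x) : firstOcc v x = p := by
  have h1 := firstOcc_le hp hx
  rcases h1.lt_or_eq with h | h
  · exact absurd (getElem_firstOcc (hx ▸ List.getElem_mem hp)) (hb _ h)
  · exact h

lemma length_pos_of_mem {v : List ℕ} {x : ℕ} (h : x ∈ v) : 0 < v.length :=
  List.length_pos_iff.2 (List.ne_nil_of_mem h)

lemma secondOcc_lt_length {v : List ℕ} {x : ℕ} (h : x ∈ v) : secondOcc v x < v.length := by
  have := length_pos_of_mem h
  rw [secondOcc_def]; omega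

lemma getElem_secondOcc {v : List ℕ} {x : ℕ} (h : x ∈ v) :
    v[secondOcc v x]'(secondOcc_lt_length h) = x := by
  have hrev : x ∈ v.reverse := List.mem_reverse.2 h
  have h2 := getElem_firstOcc hrev
  rw [List.getElem_reverse] at h2
  exact h2

lemma after_secondOcc {v : List ℕ} {x q : ℕ} (h : x ∈ v) (hq : secondOcc v x < q)
    (hql : q < v.length) : v[q] ≠ x := by
  have hrev : x ∈ v.reverse := List.mem_reverse.2 h
  have hr : firstOcc v.reverse x < v.reverse.length := firstOcc_lt_length hrev
  have hl : v.reverse.length = v.length := List.length_reverse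
  rw [secondOcc_def] at hq
  have hq2 : v.length - 1 - q < firstOcc v.reverse x := by omega
  have := before_firstOcc hq2 (by omega)
  rw [List.getElem_reverse] at this
  have he : v.length - 1 - (v.length - 1 - q) = q := by omega
  rwa [getElem_congr' he hql] at this

lemma secondOcc_eq {v : List ℕ} {x p : ℕ} (hp : p < v.length) (hx : v[p] = x)
    (ha : ∀ q (hq : q < v.length), p < q → v[q] ≠ x) : secondOcc v x = p := by
  have hm : x ∈ v := hx ▸ List.getElem_mem hp
  rcases lt_trichotomy (secondOcc v x) p with h | h | h
  · exact absurd hx (after_secondOcc hm h hp)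
  · exact h
  · exact absurd (getElem_secondOcc hm) (ha _ (secondOcc_lt_length hm) h)

lemma firstOcc_le_secondOcc {v : List ℕ} {x : ℕ} (h : x ∈ v) :
    firstOcc v x ≤ secondOcc v x :=
  firstOcc_le (secondOcc_lt_length h) (getElem_secondOcc h)

lemma decomp {v : List ℕ} {x : ℕ} (h : x ∈ v) :
    v = v.take (firstOcc v x) ++ x :: v.drop (firstOcc v x + 1) := by
  conv_lhs => rw [← List.take_append_drop (firstOcc v x) v]
  congr 1
  rw [← List.getElem_cons_drop (firstOcc_lt_length h), getElem_firstOcc h]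

lemma not_mem_take_firstOcc (v : List ℕ) (x : ℕ) : x ∉ v.take (firstOcc v x) := by
  intro hmem
  obtain ⟨q, hq, hqx⟩ := List.mem_iff_getElem.1 hmem
  rw [List.length_take] at hq
  have hq1 : q < firstOcc v x := lt_of_lt_of_le hq (min_le_left _ _)
  have hq2 : q < v.length := lt_of_lt_of_le hq (min_le_right _ _)
  rw [List.getElem_take] at hqx
  exact before_firstOcc hq1 hq2 hqx

lemma count_decomp {v : List ℕ} {x : ℕ} (h : x ∈ v) :
    v.count x = 1 + (v.drop (firstOcc v x + 1)).count x := by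
  conv_lhs => rw [decomp h]
  rw [List.count_append, List.count_cons_self,
    List.count_eq_zero.2 (not_mem_take_firstOcc v x)]
  omega

lemma count_one_uniq {v : List ℕ} {x : ℕ} (h : v.count x = 1) :
    ∀ q (hq : q < v.length), v[q] = x → q = firstOcc v x := by
  have hm : x ∈ v := List.count_pos_iff.1 (by omega)
  have hd : (v.drop (firstOcc v x + 1)).count x = 0 := by
    have := count_decomp hm; omega
  have hd' : x ∉ v.drop (firstOcc v x + 1) := List.count_eq_zero.1 hd
  intro q hq hqx
  rcases lt_trichotomy q (firstOcc v x) with h' | h' | h'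
  · exact absurd hqx (before_firstOcc h' hq)
  · exact h'
  · exfalso
    obtain ⟨r, rfl⟩ : ∃ r, q = firstOcc v x + 1 + r := ⟨q - (firstOcc v x + 1), by omega⟩
    apply hd'
    rw [List.mem_iff_getElem]
    exact ⟨r, by rw [List.length_drop]; omega, by rw [List.getElem_drop]; exact hqx⟩

lemma count_two_spec {v : List ℕ} {x : ℕ} (h : v.count x = 2) :
    firstOcc v x < secondOcc v x ∧
    ∀ q (hq : q < v.length), v[q] = x → q = firstOcc v x ∨ q = secondOcc v x := by
  have hm : x ∈ v := List.count_pos_iff.1 (by omega)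
  have hd1 : (v.drop (firstOcc v x + 1)).count x = 1 := by
    have := count_decomp hm; omega
  have hmd : x ∈ v.drop (firstOcc v x + 1) := List.count_pos_iff.1 (by omega)
  have hglt : firstOcc (v.drop (firstOcc v x + 1)) x < (v.drop (firstOcc v x + 1)).length :=
    firstOcc_lt_length hmd
  have hdlen : (v.drop (firstOcc v x + 1)).length = v.length - (firstOcc v x + 1) :=
    List.length_drop
  have huniq : ∀ r (hr : firstOcc v x + 1 + r < v.length), v[firstOcc v x + 1 + r] = x →
      r = firstOcc (v.drop (firstOcc v x + 1)) x := by
    intro r hr hrx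
    apply count_one_uniq hd1 r (by omega)
    rw [List.getElem_drop]; exact hrx
  have hsd : secondOcc v x = firstOcc v x + 1 + firstOcc (v.drop (firstOcc v x + 1)) x := by
    apply secondOcc_eq (by omega)
    · have h2 := getElem_firstOcc hmd
      rw [List.getElem_drop] at h2
      exact h2
    · intro q hq hlt hqx
      obtain ⟨r, rfl⟩ : ∃ r, q = firstOcc v x + 1 + r := ⟨q - (firstOcc v x + 1), by omega⟩
      have := huniq r (by omega) hqx
      omega
  refine ⟨by omega, ?_⟩
  intro q hq hqx
  rcases lt_trichotomy q (firstOcc v x) with h' | h' | h'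
  · exact absurd hqx (before_firstOcc h' hq)
  · left; exact h'
  · right
    obtain ⟨r, rfl⟩ : ∃ r, q = firstOcc v x + 1 + r := ⟨q - (firstOcc v x + 1), by omega⟩
    have := huniq r (by omega) hqx
    omega

end HopAux

namespace HopAux

/-! ### erase lemmas -/

lemma erase_eq (v : List ℕ) (x : ℕ) : v.erase x = v.eraseIdx (firstOcc v x) :=
  (List.eraseIdx_idxOf_eq_erase x v).symm

lemma length_erase {v : List ℕ} {x : ℕ} (h : x ∈ v) :
    (v.erase x).length = v.length - 1 := List.length_erase_of_mem h

lemma getElem_erase_lt {v : List ℕ} {x : ℕ} (h : x ∈ v) {q : ℕ} (hq : q < firstOcc v x) :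
    (v.erase x)[q]'(by rw [length_erase h]; have := firstOcc_lt_length h; omega)
      = v[q]'(by have := firstOcc_lt_length h; omega) := by
  simp only [erase_eq, List.getElem_eraseIdx]
  simp [hq]

lemma getElem_erase_ge {v : List ℕ} {x : ℕ} (h : x ∈ v) {q : ℕ}
    (hq : firstOcc v x ≤ q) (hq2 : q + 1 < v.length) :
    (v.erase x)[q]'(by rw [length_erase h]; omega) = v[q + 1]'hq2 := by
  simp only [erase_eq, List.getElem_eraseIdx]
  simp [show ¬ q < firstOcc v x by omega]

lemma firstOcc_erase_ne {v : List ℕ} {x j : ℕ} (hx : x ∈ v) (hj : j ∈ v) (hne : j ≠ x) :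
    firstOcc (v.erase x) j =
      if firstOcc v j < firstOcc v x then firstOcc v j else firstOcc v j - 1 := by
  have hf := firstOcc_lt_length hx
  have hp := firstOcc_lt_length hj
  have hpf : firstOcc v j ≠ firstOcc v x := by
    intro hh
    apply hne
    rw [← getElem_firstOcc hj, getElem_congr' hh hf, getElem_firstOcc hx]
  have hel : (v.erase x).length = v.length - 1 := length_erase hx
  split_ifs with hcase
  · apply firstOcc_eq (by omega)
    · rw [getElem_erase_lt hx hcase]; exact getElem_firstOcc hj
    · intro q hq
      rw [getElem_erase_lt hx (by omega)]
      exact before_firstOcc (by omega) (by omega)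
  · have hgt : firstOcc v x < firstOcc v j := by omega
    apply firstOcc_eq (by omega)
    · rw [getElem_erase_ge hx (by omega) (by omega)]
      rw [getElem_congr' (show firstOcc v j - 1 + 1 = firstOcc v j by omega) hp]
      exact getElem_firstOcc hj
    · intro q hq
      by_cases hq2 : q < firstOcc v x
      · rw [getElem_erase_lt hx hq2]
        exact before_firstOcc (by omega) (by omega)
      · rw [getElem_erase_ge hx (by omega) (by omega)]
        exact before_firstOcc (by omega) (by omega)

lemma secondOcc_erase_ne {v : List ℕ} {x j : ℕ} (hx : x ∈ v) (hj : j ∈ v) (hne : j ≠ x) :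
    secondOcc (v.erase x) j =
      if secondOcc v j < firstOcc v x then secondOcc v j else secondOcc v j - 1 := by
  have hf := firstOcc_lt_length hx
  have hp := secondOcc_lt_length hj
  have hpf : secondOcc v j ≠ firstOcc v x := by
    intro hh
    apply hne
    rw [← getElem_secondOcc hj, getElem_congr' hh hf, getElem_firstOcc hx]
  have hel : (v.erase x).length = v.length - 1 := length_erase hx
  split_ifs with hcase
  · apply secondOcc_eq (by omega)
    · rw [getElem_erase_lt hx hcase]; exact getElem_secondOcc hj
    · intro q hq hlt
      by_cases hq2 : q < firstOcc v x
      · rw [getElem_erase_lt hx hq2]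
        exact after_secondOcc hj (by omega) (by omega)
      · rw [getElem_erase_ge hx (by omega) (by omega)]
        exact after_secondOcc hj (by omega) (by omega)
  · have hgt : firstOcc v x < secondOcc v j := by omega
    apply secondOcc_eq (by omega)
    · rw [getElem_erase_ge hx (by omega) (by omega)]
      rw [getElem_congr' (show secondOcc v j - 1 + 1 = secondOcc v j by omega) hp]
      exact getElem_secondOcc hj
    · intro q hq hlt
      rw [getElem_erase_ge hx (by omega) (by omega)]
      exact after_secondOcc hj (by omega) (by omega)

lemma firstOcc_erase_self {v : List ℕ} {x : ℕ} (h : v.count x = 2) :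
    firstOcc (v.erase x) x = secondOcc v x - 1 := by
  have hm : x ∈ v := List.count_pos_iff.1 (by omega)
  obtain ⟨hlt, huniq⟩ := count_two_spec h
  have hf := firstOcc_lt_length hm
  have hs := secondOcc_lt_length hm
  have hel : (v.erase x).length = v.length - 1 := length_erase hm
  apply firstOcc_eq (by omega)
  · rw [getElem_erase_ge hm (by omega) (by omega)]
    rw [getElem_congr' (show secondOcc v x - 1 + 1 = secondOcc v x by omega) hs]
    exact getElem_secondOcc hm
  · intro q hq
    by_cases hq2 : q < firstOcc v x
    · rw [getElem_erase_lt hm hq2]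
      exact before_firstOcc (by omega) (by omega)
    · rw [getElem_erase_ge hm (by omega) (by omega)]
      intro hqx
      rcases huniq (q + 1) (by omega) hqx with h' | h' <;> omega

/-! ### insertIdx lemmas -/

lemma len_ins {l : List ℕ} {x k : ℕ} (hk : k ≤ l.length) :
    (l.insertIdx k x).length = l.length + 1 := List.length_insertIdx_of_le_length hk x

lemma ins_lt {l : List ℕ} {x k : ℕ} (hk : k ≤ l.length) {q : ℕ} (hq : q < k) :
    (l.insertIdx k x)[q]'(by rw [len_ins hk]; omega) = l[q]'(by omega) :=
  List.getElem_insertIdx_of_lt hq (by rw [len_ins hk]; omega)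

lemma ins_self {l : List ℕ} {x k : ℕ} (hk : k ≤ l.length) :
    (l.insertIdx k x)[k]'(by rw [len_ins hk]; omega) = x :=
  List.getElem_insertIdx_self _

lemma ins_gt {l : List ℕ} {x k : ℕ} (hk : k ≤ l.length) {q : ℕ} (hq1 : k < q)
    (hq2 : q < l.length + 1) :
    (l.insertIdx k x)[q]'(by rw [len_ins hk]; omega) = l[q - 1]'(by omega) := by
  obtain ⟨m, rfl⟩ : ∃ m, q = k + m + 1 := ⟨q - k - 1, by omega⟩
  have h2 := List.getElem_insertIdx_add_succ l x k m (by omega)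
  rw [h2]
  exact (getElem_congr' (show k + m + 1 - 1 = k + m by omega) (by omega)).symm

lemma firstOcc_insertIdx_ne {l : List ℕ} {x k j : ℕ} (hk : k ≤ l.length) (hj : j ∈ l)
    (hne : j ≠ x) :
    firstOcc (l.insertIdx k x) j =
      if firstOcc l j < k then firstOcc l j else firstOcc l j + 1 := by
  have hp := firstOcc_lt_length hj
  have hel := len_ins (x := x) hk
  split_ifs with hcase
  · apply firstOcc_eq (by omega)
    · rw [ins_lt hk hcase]; exact getElem_firstOcc hj
    · intro q hq
      rw [ins_lt hk (by omega)]
      exact before_firstOcc (by omega) (by omega)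
  · apply firstOcc_eq (by omega)
    · rw [ins_gt hk (by omega) (by omega)]
      rw [getElem_congr' (show firstOcc l j + 1 - 1 = firstOcc l j by omega) hp]
      exact getElem_firstOcc hj
    · intro q hq
      rcases lt_trichotomy q k with h' | h' | h'
      · rw [ins_lt hk h']
        exact before_firstOcc (by omega) (by omega)
      · subst h'; rw [ins_self hk]; exact fun hh => hne hh.symm
      · rw [ins_gt hk h' (by omega)]
        exact before_firstOcc (by omega) (by omega)

lemma secondOcc_insertIdx_ne {l : List ℕ} {x k j : ℕ} (hk : k ≤ l.length) (hj : j ∈ l)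
    (hne : j ≠ x) :
    secondOcc (l.insertIdx k x) j =
      if secondOcc l j < k then secondOcc l j else secondOcc l j + 1 := by
  have hp := secondOcc_lt_length hj
  have hel := len_ins (x := x) hk
  split_ifs with hcase
  · apply secondOcc_eq (by omega)
    · rw [ins_lt hk hcase]; exact getElem_secondOcc hj
    · intro q hq hlt
      rcases lt_trichotomy q k with h' | h' | h'
      · rw [ins_lt hk h']
        exact after_secondOcc hj (by omega) (by omega)
      · subst h'; rw [ins_self hk]; exact fun hh => hne hh.symm
      · rw [ins_gt hk h' (by omega)]
        exact after_secondOcc hj (by omega) (by omega)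
  · apply secondOcc_eq (by omega)
    · rw [ins_gt hk (by omega) (by omega)]
      rw [getElem_congr' (show secondOcc l j + 1 - 1 = secondOcc l j by omega) hp]
      exact getElem_secondOcc hj
    · intro q hq hlt
      rw [ins_gt hk (by omega) (by omega)]
      exact after_secondOcc hj (by omega) (by omega)

lemma firstOcc_insertIdx_self {l : List ℕ} {x k : ℕ} (hk : k ≤ l.length)
    (hkf : k ≤ firstOcc l x) :
    firstOcc (l.insertIdx k x) x = k := by
  have hel := len_ins (x := x) hk
  apply firstOcc_eq (by omega)
  · exact ins_self hk
  · intro q hq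
    rw [ins_lt hk (by omega)]
    exact before_firstOcc (by omega) (by omega)

lemma secondOcc_insertIdx_self {l : List ℕ} {x k : ℕ} (h1 : l.count x = 1)
    (hkf : k ≤ firstOcc l x) :
    secondOcc (l.insertIdx k x) x = firstOcc l x + 1 := by
  have hm : x ∈ l := List.count_pos_iff.1 (by omega)
  have hf := firstOcc_lt_length hm
  have hk : k ≤ l.length := by omega
  have hel := len_ins (x := x) hk
  apply secondOcc_eq (by omega)
  · rw [ins_gt hk (by omega) (by omega)]
    rw [getElem_congr' (show firstOcc l x + 1 - 1 = firstOcc l x by omega) hf]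
    exact getElem_firstOcc hm
  · intro q hq hlt hqx
    rw [ins_gt hk (by omega) (by omega)] at hqx
    have := count_one_uniq h1 (q - 1) (by omega) hqx
    omega

/-! ### erase/insert inverses -/

lemma insertIdx_append_length (A B : List ℕ) (x : ℕ) :
    (A ++ B).insertIdx A.length x = A ++ x :: B := by
  induction A with
  | nil => simp
  | cons a t ih => simpa [List.insertIdx_succ_cons] using ih

lemma insertIdx_firstOcc_erase {v : List ℕ} {x : ℕ} (h : x ∈ v) :
    (v.erase x).insertIdx (firstOcc v x) x = v := by
  have hf := firstOcc_lt_length h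
  rw [erase_eq, List.eraseIdx_eq_take_drop_succ]
  have hlen : firstOcc v x = (v.take (firstOcc v x)).length := by
    rw [List.length_take]; omega
  conv_lhs => arg 2; rw [hlen]
  rw [insertIdx_append_length]
  exact (decomp h).symm

lemma erase_insertIdx {l : List ℕ} {x k : ℕ} (hk : k ≤ l.length) (hkf : k ≤ firstOcc l x) :
    (l.insertIdx k x).erase x = l := by
  rw [erase_eq, firstOcc_insertIdx_self hk hkf, List.eraseIdx_insertIdx_self]

end HopAux

/-- `v` is a tree representation on `{1,…,n}`: it has length `2n`, entries in
`{1,…,n}`, every `i ∈ {1,…,n}` occurs exactly twice, the first entry is `1`,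
for every `i ∈ {2,…,n}` the first occurrence of `i` appears strictly before the
second occurrence of `i-1`, and the second occurrence of `i` appears strictly
after the second occurrence of `i-1`. -/
def IsTreeRep (n : ℕ) (v : List ℕ) : Prop :=
  v.length = 2 * n ∧
  (∀ x ∈ v, 1 ≤ x ∧ x ≤ n) ∧
  (∀ i, 1 ≤ i → i ≤ n → v.count i = 2) ∧
  v.getD 0 0 = 1 ∧
  (∀ i, 2 ≤ i → i ≤ n → firstOcc v i < secondOcc v (i - 1)) ∧
  (∀ i, 2 ≤ i → i ≤ n → secondOcc v (i - 1) < secondOcc v i)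

/-- A single HOP: for some `i ∈ {2,…,n}`, remove the first occurrence of `i`
from `v` and reinsert it at a (0-indexed) position `k` strictly after the first
entry (`1 ≤ k`) and weakly before the (resulting position of the) second
occurrence of `i-1`. -/
def IsHop (n : ℕ) (v v' : List ℕ) : Prop :=
  ∃ i k, 2 ≤ i ∧ i ≤ n ∧ 1 ≤ k ∧ k ≤ secondOcc (v.erase i) (i - 1) ∧
    v' = (v.erase i).insertIdx k i

namespace HopAux

lemma hop_spec {n : ℕ} {w w' : List ℕ} (hn : 1 ≤ n) (hw : IsTreeRep n w) (hh : IsHop n w w') :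
    IsTreeRep n w' ∧ IsHop n w' w := by
  obtain ⟨hlen, hmemb, hcount, hhead, hc5, hc6⟩ := hw
  obtain ⟨i, k, hi2, hin, hk1, hkS, rfl⟩ := hh
  have hci : w.count i = 2 := hcount i (by omega) hin
  have hmi : i ∈ w := List.count_pos_iff.1 (by omega)
  have hci1 : w.count (i - 1) = 2 := hcount (i - 1) (by omega) (by omega)
  have hmi1 : (i - 1) ∈ w := List.count_pos_iff.1 (by omega)
  have hlp : 0 < w.length := by omega
  have h0 : w[0]'hlp = 1 := by
    rw [← List.getD_eq_getElem w 0 hlp]; exact hhead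
  have hflt : firstOcc w i < w.length := firstOcc_lt_length hmi
  have hfs : firstOcc w i < secondOcc w i := (count_two_spec hci).1
  have hfp1 : firstOcc w i < secondOcc w (i - 1) := hc5 i hi2 hin
  have hp1s : secondOcc w (i - 1) < secondOcc w i := hc6 i hi2 hin
  have hslen : secondOcc w i < w.length := secondOcc_lt_length hmi
  have hf1 : 1 ≤ firstOcc w i := by
    rcases Nat.eq_zero_or_pos (firstOcc w i) with h | h
    · exfalso
      have h2 := getElem_firstOcc hmi
      rw [getElem_congr' h hlp, h0] at h2
      omega
    · exact h
  have hlen_e : (w.erase i).length = 2 * n - 1 := by rw [length_erase hmi, hlen]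
  have hS : secondOcc (w.erase i) (i - 1) = secondOcc w (i - 1) - 1 := by
    rw [secondOcc_erase_ne hmi hmi1 (by omega)]
    rw [if_neg (by omega)]
  rw [hS] at hkS
  have hFei : firstOcc (w.erase i) i = secondOcc w i - 1 := firstOcc_erase_self hci
  have hcei : (w.erase i).count i = 1 := by rw [List.count_erase_self, hci]
  have hkle : k ≤ (w.erase i).length := by omega
  have hkf : k ≤ firstOcc (w.erase i) i := by omega
  have hperm : ((w.erase i).insertIdx k i).Perm w :=
    (List.perm_insertIdx i (w.erase i) hkle).trans (List.perm_cons_erase hmi).symm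
  have hlen' : ((w.erase i).insertIdx k i).length = 2 * n := by
    rw [len_ins hkle, hlen_e]; omega
  -- position formulas in w'
  have hne_f : ∀ j, j ≠ i → j ∈ w →
      firstOcc w j ≠ firstOcc w i ∧ secondOcc w j ≠ firstOcc w i := by
    intro j hj hjw
    constructor <;> intro hh
    · have h2 := getElem_firstOcc hjw
      rw [getElem_congr' hh hflt, getElem_firstOcc hmi] at h2
      exact hj h2.symm
    · have h2 := getElem_secondOcc hjw
      rw [getElem_congr' hh hflt, getElem_firstOcc hmi] at h2
      exact hj h2.symm
  have hF' : ∀ j, j ≠ i → j ∈ w → firstOcc ((w.erase i).insertIdx k i) j =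
      if (if firstOcc w j < firstOcc w i then firstOcc w j else firstOcc w j - 1) < k
      then (if firstOcc w j < firstOcc w i then firstOcc w j else firstOcc w j - 1)
      else (if firstOcc w j < firstOcc w i then firstOcc w j else firstOcc w j - 1) + 1 := by
    intro j hj hjw
    rw [firstOcc_insertIdx_ne hkle ((List.mem_erase_of_ne hj).2 hjw) hj,
      firstOcc_erase_ne hmi hjw hj]
  have hS' : ∀ j, j ≠ i → j ∈ w → secondOcc ((w.erase i).insertIdx k i) j =
      if (if secondOcc w j < firstOcc w i then secondOcc w j else secondOcc w j - 1) < k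
      then (if secondOcc w j < firstOcc w i then secondOcc w j else secondOcc w j - 1)
      else (if secondOcc w j < firstOcc w i then secondOcc w j else secondOcc w j - 1) + 1 := by
    intro j hj hjw
    rw [secondOcc_insertIdx_ne hkle ((List.mem_erase_of_ne hj).2 hjw) hj,
      secondOcc_erase_ne hmi hjw hj]
  have hFi' : firstOcc ((w.erase i).insertIdx k i) i = k := firstOcc_insertIdx_self hkle hkf
  have hSi' : secondOcc ((w.erase i).insertIdx k i) i = secondOcc w i := by
    rw [secondOcc_insertIdx_self hcei hkf, hFei]; omega
  have hSim1' : secondOcc ((w.erase i).insertIdx k i) (i - 1) = secondOcc w (i - 1) := by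
    rw [hS' (i - 1) (by omega) hmi1]
    have := (hne_f (i - 1) (by omega) hmi1).2
    split_ifs <;> omega
  constructor
  · refine ⟨hlen', ?_, ?_, ?_, ?_, ?_⟩
    · intro x hx
      exact hmemb x (hperm.mem_iff.1 hx)
    · intro j hj1 hjn
      rw [hperm.count_eq]
      exact hcount j hj1 hjn
    · have hl0 : 0 < ((w.erase i).insertIdx k i).length := by omega
      rw [List.getD_eq_getElem _ _ hl0]
      rw [ins_lt hkle (by omega : 0 < k), getElem_erase_lt hmi (by omega : 0 < firstOcc w i)]
      exact h0
    · intro j hj2 hjn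
      have hjw : j ∈ w := List.count_pos_iff.1 (by rw [hcount j (by omega) hjn]; omega)
      have hj1w : (j - 1) ∈ w := List.count_pos_iff.1
        (by rw [hcount (j - 1) (by omega) (by omega)]; omega)
      by_cases hji : j = i
      · subst hji
        rw [hFi', hSim1']
        omega
      · by_cases hji1 : j = i + 1
        · subst hji1
          have e1 : i + 1 - 1 = i := by omega
          rw [e1, hSi', hF' (i + 1) (by omega) hjw]
          have h5 := hc5 (i + 1) (by omega) hjn
          rw [e1] at h5
          have := (hne_f (i + 1) (by omega) hjw).1
          split_ifs <;> omega
        · have hj1i : j - 1 ≠ i := by omega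
          rw [hF' j hji hjw, hS' (j - 1) hj1i hj1w]
          have h5 := hc5 j hj2 hjn
          have h1 := (hne_f j hji hjw).1
          have h2 := (hne_f (j - 1) hj1i hj1w).2
          split_ifs <;> omega
    · intro j hj2 hjn
      have hjw : j ∈ w := List.count_pos_iff.1 (by rw [hcount j (by omega) hjn]; omega)
      have hj1w : (j - 1) ∈ w := List.count_pos_iff.1
        (by rw [hcount (j - 1) (by omega) (by omega)]; omega)
      by_cases hji : j = i
      · subst hji
        rw [hSi', hSim1']
        omega
      · by_cases hji1 : j = i + 1
        · subst hji1
          have e1 : i + 1 - 1 = i := by omega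
          rw [e1, hSi', hS' (i + 1) (by omega) hjw]
          have h6 := hc6 (i + 1) (by omega) hjn
          rw [e1] at h6
          have := (hne_f (i + 1) (by omega) hjw).2
          split_ifs <;> omega
        · have hj1i : j - 1 ≠ i := by omega
          rw [hS' j hji hjw, hS' (j - 1) hj1i hj1w]
          have h6 := hc6 j hj2 hjn
          have h1 := (hne_f j hji hjw).2
          have h2 := (hne_f (j - 1) hj1i hj1w).2
          split_ifs <;> omega
  · refine ⟨i, firstOcc w i, hi2, hin, hf1, ?_, ?_⟩
    · rw [erase_insertIdx hkle hkf, hS]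
      omega
    · rw [erase_insertIdx hkle hkf]
      exact (insertIdx_firstOcc_erase hmi).symm

end HopAux

/-- `u` can be transformed into `v` by a sequence of exactly `m` HOPs. -/
def HopChain (n m : ℕ) (u v : List ℕ) : Prop :=
  ∃ f : ℕ → List ℕ, f 0 = u ∧ f m = v ∧ ∀ j < m, IsHop n (f j) (f (j + 1))

namespace HopAux

lemma chain_refl (n : ℕ) (u : List ℕ) : HopChain n 0 u u :=
  ⟨fun _ => u, rfl, rfl, by omega⟩

lemma chain_single {n : ℕ} {u v : List ℕ} (h : IsHop n u v) : HopChain n 1 u v := by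
  refine ⟨fun j => if j = 0 then u else v, by simp, by simp, ?_⟩
  intro j hj
  have : j = 0 := by omega
  subst this
  simpa using h

lemma chain_trans {n m₁ m₂ : ℕ} {u v w : List ℕ} (h1 : HopChain n m₁ u v)
    (h2 : HopChain n m₂ v w) : HopChain n (m₁ + m₂) u w := by
  obtain ⟨f1, hf10, hf1m, hf1s⟩ := h1
  obtain ⟨f2, hf20, hf2m, hf2s⟩ := h2
  refine ⟨fun j => if j ≤ m₁ then f1 j else f2 (j - m₁), by simp [hf10], ?_, ?_⟩
  · beta_reduce
    by_cases h : m₂ = 0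
    · subst h
      simp only [Nat.add_zero, le_refl, if_pos]
      rw [hf1m, ← hf20, ← hf2m]
    · rw [if_neg (by omega)]
      rw [show m₁ + m₂ - m₁ = m₂ by omega, hf2m]
  · have haux : ∀ j, m₁ ≤ j → (if j ≤ m₁ then f1 j else f2 (j - m₁)) = f2 (j - m₁) := by
      intro j hj
      rcases eq_or_lt_of_le hj with h | h
      · subst h
        simp [hf1m, ← hf20]
      · rw [if_neg (by omega)]
    intro j hj
    beta_reduce
    by_cases h : j < m₁
    · rw [if_pos (by omega), if_pos (by omega)]
      exact hf1s j h
    · rw [haux j (by omega), haux (j + 1) (by omega)]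
      rw [show j + 1 - m₁ = j - m₁ + 1 by omega]
      exact hf2s (j - m₁) (by omega)

lemma chain_steps_preserve {n m : ℕ} {f : ℕ → List ℕ} (hn : 1 ≤ n) (hu : IsTreeRep n (f 0))
    (hfs : ∀ j < m, IsHop n (f j) (f (j + 1))) : ∀ j ≤ m, IsTreeRep n (f j) := by
  intro j
  induction j with
  | zero => intro _; exact hu
  | succ j ih =>
    intro hj
    exact (hop_spec hn (ih (by omega)) (hfs j (by omega))).1

lemma chain_reverse {n m : ℕ} {u v : List ℕ} (hn : 1 ≤ n) (hu : IsTreeRep n u)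
    (h : HopChain n m u v) : HopChain n m v u := by
  obtain ⟨f, hf0, hfm, hfs⟩ := h
  have htr : ∀ j ≤ m, IsTreeRep n (f j) := chain_steps_preserve hn (hf0 ▸ hu) hfs
  refine ⟨fun j => f (m - j), by simp [hfm], by simp [hf0], ?_⟩
  intro j hj
  beta_reduce
  have hstep : IsHop n (f (m - j - 1)) (f (m - j - 1 + 1)) := hfs (m - j - 1) (by omega)
  rw [show m - j - 1 + 1 = m - j by omega] at hstep
  have hrev := (hop_spec hn (htr (m - j - 1) (by omega)) hstep).2
  rw [show m - (j + 1) = m - j - 1 by omega]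
  exact hrev

end HopAux

/-- The HOP distance: minimum number of HOPs transforming `u` into `v`. -/
noncomputable def hopDist (n : ℕ) (u v : List ℕ) : ℕ :=
  sInf {m | HopChain n m u v}

namespace HopAux

lemma prefix_step {n : ℕ} {z : List ℕ} (hz : IsTreeRep n z) {m : ℕ} (hm1 : 1 ≤ m) (hmn : m < n)
    (ht : ∀ q, q < m → z.getD q 0 = q + 1) :
    ∃ z', IsHop n z z' ∧ (∀ q, q < m + 1 → z'.getD q 0 = q + 1) := by
  obtain ⟨hlen, hmemb, hcount, hhead, hc5, hc6⟩ := hz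
  have hzlen : 0 < z.length := by omega
  have hpre : ∀ q (hq : q < m), z[q]'(by omega) = q + 1 := by
    intro q hq
    rw [← List.getD_eq_getElem z 0 (by omega)]
    exact ht q hq
  have hci : z.count (m + 1) = 2 := hcount (m + 1) (by omega) (by omega)
  have hmi : (m + 1) ∈ z := List.count_pos_iff.1 (by omega)
  have hcm : z.count m = 2 := hcount m (by omega) (by omega)
  have hmm : m ∈ z := List.count_pos_iff.1 (by omega)
  have hfge : m ≤ firstOcc z (m + 1) := by
    by_contra h
    push_neg at h
    have a := getElem_firstOcc hmi
    have b := hpre (firstOcc z (m + 1)) h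
    rw [b] at a
    omega
  have hfm : firstOcc z m = m - 1 := by
    apply firstOcc_eq (by omega)
    · rw [hpre (m - 1) (by omega)]; omega
    · intro q hq
      rw [hpre q (by omega)]; omega
  have hsm : m ≤ secondOcc z m := by
    have h4 := (count_two_spec hcm).1
    omega
  have hfmne : firstOcc z (m + 1) ≠ secondOcc z m := by
    intro hh
    have a := getElem_firstOcc hmi
    have hslt : secondOcc z m < z.length := secondOcc_lt_length hmm
    rw [getElem_congr' hh hslt, getElem_secondOcc hmm] at a
    omega
  have hSe : m ≤ secondOcc (z.erase (m + 1)) m := by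
    rw [secondOcc_erase_ne hmi hmm (by omega)]
    split_ifs <;> omega
  have hlen_e : (z.erase (m + 1)).length = 2 * n - 1 := by rw [length_erase hmi, hlen]
  have hkle : m ≤ (z.erase (m + 1)).length := by omega
  refine ⟨(z.erase (m + 1)).insertIdx m (m + 1),
    ⟨m + 1, m, by omega, by omega, by omega, by simpa using hSe, rfl⟩, ?_⟩
  intro q hq
  have hlen' : ((z.erase (m + 1)).insertIdx m (m + 1)).length = 2 * n := by
    rw [len_ins hkle]; omega
  rw [List.getD_eq_getElem _ 0 (by omega)]
  by_cases hqm : q < m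
  · rw [ins_lt hkle hqm, getElem_erase_lt hmi (by omega)]
    exact hpre q hqm
  · have hqe : q = m := by omega
    subst hqe
    rw [ins_self hkle]

lemma chain_to_prefix {n : ℕ} (hn : 2 ≤ n) {u : List ℕ} (hu : IsTreeRep n u) :
    ∀ m, 1 ≤ m → m ≤ n →
      ∃ t z, HopChain n t u z ∧ IsTreeRep n z ∧ ∀ q, q < m → z.getD q 0 = q + 1 := by
  intro m
  induction m with
  | zero => omega
  | succ m ih =>
    intro _ hmn
    by_cases hm0 : m = 0
    · subst hm0
      refine ⟨0, u, chain_refl n u, hu, ?_⟩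
      intro q hq
      have hq0 : q = 0 := by omega
      subst hq0
      exact hu.2.2.2.1
    · obtain ⟨t, z, hc, hz, hp⟩ := ih (by omega) (by omega)
      obtain ⟨z', hhop, hp'⟩ := prefix_step hz (by omega) (by omega) hp
      exact ⟨t + 1, z', chain_trans hc (chain_single hhop),
        (hop_spec (by omega) hz hhop).1, hp'⟩

lemma eq_canonical {n : ℕ} (hn : 2 ≤ n) {z : List ℕ} (hz : IsTreeRep n z)
    (ht : ∀ q, q < n → z.getD q 0 = q + 1) :
    z = List.range' 1 n ++ List.range' 1 n := by
  obtain ⟨hlen, hmemb, hcount, hhead, hc5, hc6⟩ := hz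
  have hzlen : 0 < z.length := by omega
  have hpre : ∀ q (hq : q < n), z[q]'(by omega) = q + 1 := by
    intro q hq
    rw [← List.getD_eq_getElem z 0 (by omega)]
    exact ht q hq
  have hmem_of : ∀ j, 1 ≤ j → j ≤ n → j ∈ z := fun j h1 h2 =>
    List.count_pos_iff.1 (by rw [hcount j h1 h2]; omega)
  have hFj : ∀ j, 1 ≤ j → j ≤ n → firstOcc z j = j - 1 := by
    intro j h1 h2
    apply firstOcc_eq (by omega)
    · rw [hpre (j - 1) (by omega)]; omega
    · intro q hq
      rw [hpre q (by omega)]; omega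
  have hSn : ∀ j, 1 ≤ j → j ≤ n → n ≤ secondOcc z j := by
    intro j h1 h2
    have hmj : j ∈ z := hmem_of j h1 h2
    have hlt : firstOcc z j < secondOcc z j := (count_two_spec (hcount j h1 h2)).1
    by_contra h
    push_neg at h
    have a := getElem_secondOcc hmj
    have b := hpre (secondOcc z j) h
    rw [b] at a
    rw [hFj j h1 h2] at hlt
    omega
  have hup : ∀ d j, 1 ≤ j → j + d ≤ n → secondOcc z j + d ≤ secondOcc z (j + d) := by
    intro d
    induction d with
    | zero => simp
    | succ d ih =>
      intro j h1 h2
      have hih := ih j h1 (by omega)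
      have h6 := hc6 (j + d + 1) (by omega) (by omega)
      rw [show j + d + 1 - 1 = j + d by omega] at h6
      have : j + (d + 1) = j + d + 1 := by omega
      rw [this]
      omega
  have hchain : ∀ j, 1 ≤ j → j ≤ n → secondOcc z j = n + j - 1 := by
    intro j h1 h2
    have l1 : n ≤ secondOcc z 1 := hSn 1 (by omega) (by omega)
    have l2 := hup (j - 1) 1 (by omega) (by omega)
    rw [show 1 + (j - 1) = j by omega] at l2
    have l3 := hup (n - j) j h1 (by omega)
    rw [show j + (n - j) = n by omega] at l3
    have l4 : secondOcc z n < z.length := secondOcc_lt_length (hmem_of n (by omega) le_rfl)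
    omega
  have hpost : ∀ q (h1 : n ≤ q) (h2 : q < 2 * n), z[q]'(by omega) = q - n + 1 := by
    intro q h1 h2
    have hj1 : 1 ≤ q - n + 1 := by omega
    have hjn : q - n + 1 ≤ n := by omega
    have hmj : (q - n + 1) ∈ z := hmem_of _ hj1 hjn
    have e : secondOcc z (q - n + 1) = q := by
      rw [hchain (q - n + 1) hj1 hjn]; omega
    have h3 := getElem_secondOcc hmj
    rw [getElem_congr' e (by omega)] at h3
    exact h3
  apply List.ext_getElem
  · rw [hlen]
    simp [List.length_range', List.length_append]
    omega
  · intro q h1 h2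
    by_cases hq : q < n
    · rw [List.getElem_append_left (by simp [List.length_range']; omega),
        List.getElem_range', hpre q hq]
      omega
    · rw [List.getElem_append_right (by simp [List.length_range']; omega)]
      rw [hlen] at h1
      rw [hpost q (by omega) (by omega)]
      simp [List.length_range', List.getElem_range']
      omega

lemma exists_chain {n : ℕ} (hn : 2 ≤ n) {u v : List ℕ} (hu : IsTreeRep n u)
    (hv : IsTreeRep n v) : ∃ m, HopChain n m u v := by
  obtain ⟨t1, z1, hc1, hz1, hp1⟩ := chain_to_prefix hn hu n (by omega) le_rfl
  obtain ⟨t2, z2, hc2, hz2, hp2⟩ := chain_to_prefix hn hv n (by omega) le_rfl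
  have e12 : z1 = z2 := (eq_canonical hn hz1 hp1).trans (eq_canonical hn hz2 hp2).symm
  have hrev : HopChain n t2 z2 v := chain_reverse (by omega) hv hc2
  exact ⟨t1 + t2, chain_trans hc1 (e12 ▸ hrev)⟩

end HopAux

/-- For `n ≥ 2`, the HOP distance is a metric on tree representations on
`{1,…,n}`: it is finite (some finite sequence of HOPs transforms `u` into `v`),
symmetric, zero exactly on equal representations, and satisfies the triangle
inequality. -/
theorem stmt14 (n : ℕ) (hn : 2 ≤ n) (u v w : List ℕ)
    (hu : IsTreeRep n u) (hv : IsTreeRep n v) (hw : IsTreeRep n w) :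
    (∃ m, HopChain n m u v) ∧
    hopDist n u v = hopDist n v u ∧
    (hopDist n u v = 0 ↔ u = v) ∧
    hopDist n u w ≤ hopDist n u v + hopDist n v w := by
  have hn1 : 1 ≤ n := by omega
  refine ⟨HopAux.exists_chain hn hu hv, ?_, ?_, ?_⟩
  · unfold hopDist
    congr 1
    ext m
    simp only [Set.mem_setOf_eq]
    exact ⟨fun h => HopAux.chain_reverse hn1 hu h, fun h => HopAux.chain_reverse hn1 hv h⟩
  · constructor
    · intro h
      have hne : {m | HopChain n m u v}.Nonempty := HopAux.exists_chain hn hu hv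
      have hmem := Nat.sInf_mem hne
      unfold hopDist at h
      rw [h] at hmem
      obtain ⟨f, hf0, hfm, -⟩ := hmem
      exact hf0.symm.trans hfm
    · rintro rfl
      unfold hopDist
      exact Nat.sInf_eq_zero.2 (Or.inl (HopAux.chain_refl n u))
  · have h1 := Nat.sInf_mem (HopAux.exists_chain hn hu hv : {m | HopChain n m u v}.Nonempty)
    have h2 := Nat.sInf_mem (HopAux.exists_chain hn hv hw : {m | HopChain n m v w}.Nonempty)
    unfold hopDist
    exact Nat.sInf_le (HopAux.chain_trans h1 h2)
end

section
/- Let n ≥ 2 and let u, v be tree representations on {1,…,n}. Then d(u,v) ≤ n; that is, the diameter of the space of tree representations on {1,…,n} under the HOP operation is at most n. -/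
namespace TreeRepAux
open List

lemma insertIdx_decomp (X Y : List ℕ) (x : ℕ) :
    (X ++ Y).insertIdx X.length x = X ++ x :: Y := by
  induction X with
  | nil => rfl
  | cons a X ih => simpa [List.insertIdx_succ_cons] using ih

lemma insertIdx_decomp' {X : List ℕ} {p : ℕ} (Y : List ℕ) (x : ℕ) (h : X.length = p) :
    (X ++ Y).insertIdx p x = X ++ x :: Y := by
  subst h; exact insertIdx_decomp X Y x

lemma insertIdx_append_right (X B : List ℕ) (q x : ℕ) :
    (X ++ B).insertIdx (X.length + q) x = X ++ B.insertIdx q x := by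
  induction X with
  | nil => simp
  | cons a l ih =>
    have hh : (a :: l).length + q = (l.length + q) + 1 := by simp; omega
    rw [hh]
    show (a :: (l ++ B)).insertIdx ((l.length + q) + 1) x = _
    rw [List.insertIdx_succ_cons, ih]
    rfl

lemma insertIdx_append_right' (X B : List ℕ) (p x : ℕ) (h : X.length ≤ p) :
    (X ++ B).insertIdx p x = X ++ B.insertIdx (p - X.length) x := by
  have h2 := insertIdx_append_right X B (p - X.length) x
  rwa [Nat.add_sub_cancel' h] at h2

lemma erase_decomp (X Y : List ℕ) (x : ℕ) (hx : x ∉ X) :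
    (X ++ x :: Y).erase x = X ++ Y := by
  rw [List.erase_append_right _ hx]
  simp

lemma secondOcc_ge (X Y : List ℕ) (x : ℕ) (hx : x ∈ Y) :
    X.length ≤ secondOcc (X ++ Y) x := by
  have hx' : x ∈ Y.reverse := by simpa using hx
  have h1 : (X ++ Y).reverse.idxOf x = Y.reverse.idxOf x := by
    rw [List.reverse_append, List.idxOf_append_of_mem hx']
  have h2 : Y.reverse.idxOf x < Y.length := by
    simpa using List.idxOf_lt_length_iff.mpr hx'
  unfold secondOcc
  rw [h1, List.length_append]
  omega

lemma mem_split_first {l : List ℕ} {a : ℕ} (h : a ∈ l) :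
    ∃ s t, l = s ++ a :: t ∧ a ∉ s := by
  induction l with
  | nil => cases h
  | cons b r ih =>
    by_cases hb : b = a
    · exact ⟨[], r, by rw [hb]; rfl, by simp⟩
    · have ha : a ∈ r := by
        rcases List.mem_cons.mp h with h' | h'
        · exact absurd h'.symm hb
        · exact h'
      rcases ih ha with ⟨s, t, rfl, hs⟩
      refine ⟨b :: s, t, rfl, ?_⟩
      simp only [List.mem_cons, not_or]
      exact ⟨fun h' => hb h'.symm, hs⟩

lemma count_one_split {l : List ℕ} {a : ℕ} (h : l.count a = 1) :
    ∃ s t, l = s ++ a :: t ∧ a ∉ s ∧ a ∉ t := by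
  have hm : a ∈ l := List.count_pos_iff.mp (by omega)
  rcases mem_split_first hm with ⟨s, t, rfl, hs⟩
  have : (s ++ a :: t).count a = s.count a + (t.count a + 1) := by
    simp [List.count_append]
  have hs0 : s.count a = 0 := List.count_eq_zero.mpr hs
  have ht0 : t.count a = 0 := by omega
  exact ⟨s, t, rfl, hs, List.count_eq_zero.mp ht0⟩

def body : ℕ → List (List ℕ) → List ℕ
  | _, [] => []
  | s, g :: gs => g ++ s :: body (s+1) gs

lemma body_append (L₁ L₂ : List (List ℕ)) : ∀ s,
    body s (L₁ ++ L₂) = body s L₁ ++ body (s + L₁.length) L₂ := by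
  induction L₁ with
  | nil => intro s; simp [body]
  | cons g gs ih =>
    intro s
    show g ++ s :: body (s+1) (gs ++ L₂) = (g ++ s :: body (s+1) gs) ++ body (s + (g :: gs).length) L₂
    rw [ih (s+1)]
    simp only [List.length_cons, List.append_assoc, List.cons_append]
    have hh : s + 1 + gs.length = s + (gs.length + 1) := by omega
    rw [hh]

lemma mem_body_skel (L : List (List ℕ)) : ∀ s t, s ≤ t → t < s + L.length → t ∈ body s L := by
  induction L with
  | nil => intro s t h1 h2; simp at h2; omega
  | cons g gs ih =>
    intro s t h1 h2
    rcases eq_or_lt_of_le h1 with rfl | h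
    · simp [body]
    · have := ih (s+1) t h (by simp at h2 ⊢; omega)
      simp [body, this]

lemma mem_body (L : List (List ℕ)) : ∀ s x, x ∈ body s L →
    (∃ g ∈ L, x ∈ g) ∨ (s ≤ x ∧ x < s + L.length) := by
  induction L with
  | nil => intro s x h; simp [body] at h
  | cons g gs ih =>
    intro s x h
    simp only [body, List.mem_append, List.mem_cons] at h
    rcases h with h | h | h
    · exact Or.inl ⟨g, by simp, h⟩
    · right; simp; omega
    · rcases ih (s+1) x h with ⟨g', hg', hx⟩ | ⟨h1, h2⟩
      · exact Or.inl ⟨g', by simp [hg'], hx⟩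
      · right; simp at h2 ⊢; omega

lemma mem_zipWith {f : List ℕ → List ℕ → List ℕ} :
    ∀ {A B : List (List ℕ)} {g}, g ∈ List.zipWith f A B →
      ∃ a b, a ∈ A ∧ b ∈ B ∧ g = f a b := by
  intro A
  induction A with
  | nil => intro B g h; simp at h
  | cons a A ih =>
    intro B g h
    cases B with
    | nil => simp at h
    | cons b B =>
      simp only [List.zipWith_cons_cons, List.mem_cons] at h
      rcases h with rfl | h
      · exact ⟨a, b, by simp, by simp, rfl⟩
      · rcases ih h with ⟨a', b', ha, hb, rfl⟩
        exact ⟨a', b', by simp [ha], by simp [hb], rfl⟩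

lemma insert_body (x : ℕ) : ∀ (gs : List (List ℕ)) (s p : ℕ), p < (body s gs).length →
    ∃ gs₂, gs₂.length = gs.length ∧ body s gs₂ = (body s gs).insertIdx p x ∧
      (∃ U V, gs.flatten = U ++ V ∧ gs₂.flatten = U ++ x :: V) ∧
      (∀ (t : ℕ) (g₂ : List ℕ), gs₂[t]? = some g₂ → ∃ g, gs[t]? = some g ∧ ∀ y ∈ g₂, y ∈ g ∨ y = x) := by
  intro gs
  induction gs with
  | nil => intro s p h; simp [body] at h
  | cons g rest ih =>
    intro s p h
    by_cases hp : p ≤ g.length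
    · refine ⟨(g.take p ++ x :: g.drop p) :: rest, by simp, ?_, ?_, ?_⟩
      · have hg : g = g.take p ++ g.drop p := (List.take_append_drop p g).symm
        calc body s ((g.take p ++ x :: g.drop p) :: rest)
            = g.take p ++ x :: (g.drop p ++ s :: body (s+1) rest) := by
              simp [body]
          _ = (body s (g :: rest)).insertIdx p x := by
              have h1 : body s (g :: rest) = g.take p ++ (g.drop p ++ s :: body (s+1) rest) := by
                simp only [body]; rw [← List.append_assoc, ← hg]
              have hlen : (g.take p).length = p := List.length_take_of_le hp
              rw [h1, insertIdx_decomp' _ x hlen]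
      · refine ⟨g.take p, g.drop p ++ rest.flatten, ?_, by simp⟩
        simp only [List.flatten_cons]
        rw [← List.append_assoc, List.take_append_drop]
      · intro t g₂ hg₂
        cases t with
        | zero =>
          simp only [List.getElem?_cons_zero, Option.some.injEq] at hg₂
          refine ⟨g, by simp, ?_⟩
          intro y hy
          rw [← hg₂] at hy
          simp only [List.mem_append, List.mem_cons] at hy
          rcases hy with hy | rfl | hy
          · exact Or.inl (List.mem_of_mem_take hy)
          · exact Or.inr rfl
          · exact Or.inl (List.mem_of_mem_drop hy)
        | succ t =>
          simp only [List.getElem?_cons_succ] at hg₂ ⊢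
          exact ⟨g₂, hg₂, fun y hy => Or.inl hy⟩
    · push_neg at hp
      have hq : p - (g.length + 1) < (body (s+1) rest).length := by
        simp only [body, List.length_append, List.length_cons] at h
        omega
      rcases ih (s+1) (p - (g.length + 1)) hq with ⟨gs₂, hlen, hbody, ⟨U, V, hU, hV⟩, hgaps⟩
      refine ⟨g :: gs₂, by simp [hlen], ?_, ⟨g ++ U, V, by simp [hU], by simp [hV]⟩, ?_⟩
      · have hsplit : body s (g :: rest) = (g ++ [s]) ++ body (s+1) rest := by
          simp [body]
        have hXlen : (g ++ [s]).length = g.length + 1 := by simp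
        have h2 : ((g ++ [s]) ++ body (s+1) rest).insertIdx p x
            = (g ++ [s]) ++ (body (s+1) rest).insertIdx (p - (g.length + 1)) x := by
          rw [insertIdx_append_right' _ _ p x (by rw [hXlen]; omega), hXlen]
        rw [hsplit, h2, ← hbody]
        simp [body]
      · intro t g₂ hg₂
        cases t with
        | zero =>
          simp only [List.getElem?_cons_zero, Option.some.injEq] at hg₂
          cases hg₂
          exact ⟨g, by simp, fun y hy => Or.inl hy⟩
        | succ t =>
          simp only [List.getElem?_cons_succ] at hg₂ ⊢
          exact hgaps t g₂ hg₂

lemma split_gaps {gs : List (List ℕ)} {i : ℕ} (h : gs.flatten.count i = 1) :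
    ∃ G₁ P Q G₂, gs = G₁ ++ (P ++ i :: Q) :: G₂ ∧ i ∉ G₁.flatten ∧ i ∉ P ∧ i ∉ Q ∧
      i ∉ G₂.flatten := by
  induction gs with
  | nil => simp at h
  | cons g rest ih =>
    simp only [List.flatten_cons, List.count_append] at h
    by_cases hg : i ∈ g
    · have hg1 : g.count i = 1 := by
        have := List.count_pos_iff.mpr hg
        omega
      have hr : i ∉ rest.flatten := List.count_eq_zero.mp (by omega)
      rcases count_one_split hg1 with ⟨P, Q, rfl, hP, hQ⟩
      exact ⟨[], P, Q, rest, rfl, by simp, hP, hQ, hr⟩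
    · have hg0 : g.count i = 0 := List.count_eq_zero.mpr hg
      rcases ih (by omega) with ⟨G₁, P, Q, G₂, rfl, h1, h2, h3, h4⟩
      exact ⟨g :: G₁, P, Q, G₂, rfl, by simp [hg, h1], h2, h3, h4⟩

lemma del_firstOcc (D E : List ℕ) (c x : ℕ) (hx : x ≠ c) (hm : x ∈ D ++ E) :
    (x ∈ D ∧ firstOcc (D ++ c :: E) x = firstOcc (D ++ E) x ∧ firstOcc (D ++ E) x < D.length) ∨
    (x ∉ D ∧ firstOcc (D ++ c :: E) x = firstOcc (D ++ E) x + 1 ∧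
      D.length ≤ firstOcc (D ++ E) x) := by
  by_cases hD : x ∈ D
  · left
    refine ⟨hD, ?_, ?_⟩
    · unfold firstOcc
      rw [List.idxOf_append_of_mem hD, List.idxOf_append_of_mem hD]
    · unfold firstOcc
      rw [List.idxOf_append_of_mem hD]
      exact List.idxOf_lt_length_iff.mpr hD
  · right
    have hE : x ∈ E := by
      rcases List.mem_append.mp hm with h | h
      · exact absurd h hD
      · exact h
    refine ⟨hD, ?_, ?_⟩
    · unfold firstOcc
      rw [List.idxOf_append_of_notMem hD, List.idxOf_append_of_notMem hD,
        List.idxOf_cons_ne _ (fun h => hx h.symm)]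
      omega
    · unfold firstOcc
      rw [List.idxOf_append_of_notMem hD]
      omega

lemma del_secondOcc (D E : List ℕ) (c z : ℕ) (hz : z ≠ c) (hm : z ∈ D ++ E) :
    (z ∈ E ∧ secondOcc (D ++ c :: E) z = secondOcc (D ++ E) z + 1 ∧
      D.length ≤ secondOcc (D ++ E) z) ∨
    (z ∉ E ∧ secondOcc (D ++ c :: E) z = secondOcc (D ++ E) z ∧
      secondOcc (D ++ E) z < D.length) := by
  have h1 : (D ++ c :: E).reverse = E.reverse ++ c :: D.reverse := by simp
  have h0 : (D ++ E).reverse = E.reverse ++ D.reverse := by simp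
  by_cases hE : z ∈ E
  · left
    have hE' : z ∈ E.reverse := by simpa using hE
    have he : E.reverse.idxOf z < E.length := by
      simpa using List.idxOf_lt_length_iff.mpr hE'
    refine ⟨hE, ?_, ?_⟩
    · unfold secondOcc
      rw [h1, h0, List.idxOf_append_of_mem hE', List.idxOf_append_of_mem hE']
      simp only [List.length_append, List.length_cons]
      omega
    · unfold secondOcc
      rw [h0, List.idxOf_append_of_mem hE']
      simp only [List.length_append]
      omega
  · right
    have hD : z ∈ D := by
      rcases List.mem_append.mp hm with h | h
      · exact h
      · exact absurd h hE
    have hE' : z ∉ E.reverse := by simpa using hE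
    have hD' : z ∈ D.reverse := by simpa using hD
    have hd : D.reverse.idxOf z < D.length := by
      simpa using List.idxOf_lt_length_iff.mpr hD'
    refine ⟨hE, ?_, ?_⟩
    · unfold secondOcc
      rw [h1, h0, List.idxOf_append_of_notMem hE', List.idxOf_append_of_notMem hE',
        List.idxOf_cons_ne _ (fun h => hz h.symm)]
      simp only [List.length_append, List.length_cons, List.length_reverse]
      omega
    · unfold secondOcc
      rw [h0, List.idxOf_append_of_notMem hE']
      simp only [List.length_append, List.length_reverse]
      omega

lemma appc_firstOcc (W : List ℕ) (c x : ℕ) (hm : x ∈ W) :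
    firstOcc (W ++ [c]) x = firstOcc W x := List.idxOf_append_of_mem hm

lemma appc_secondOcc (W : List ℕ) (c x : ℕ) (hx : x ≠ c) (hm : x ∈ W) :
    secondOcc (W ++ [c]) x = secondOcc W x := by
  have h1 : (W ++ [c]).reverse = c :: W.reverse := by simp
  have hm' : x ∈ W.reverse := by simpa using hm
  have hr : W.reverse.idxOf x < W.length := by
    simpa using List.idxOf_lt_length_iff.mpr hm'
  unfold secondOcc
  rw [h1, List.idxOf_cons_ne _ (fun h => hx h.symm)]
  simp only [List.length_append, List.length_cons, List.length_nil]
  omega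

lemma secondOcc_mono {w : List ℕ} {n : ℕ}
    (hcond : ∀ i, 2 ≤ i → i ≤ n → secondOcc w (i - 1) < secondOcc w i)
    {a b : ℕ} (ha : 1 ≤ a) (hab : a ≤ b) (hb : b ≤ n) :
    secondOcc w a ≤ secondOcc w b := by
  induction b with
  | zero => omega
  | succ m ih =>
    rcases Nat.lt_or_ge a (m + 1) with h | h
    · have h1 := ih (by omega) (by omega)
      have h2 := hcond (m + 1) (by omega) hb
      simp only [Nat.add_sub_cancel] at h2
      omega
    · have : a = m + 1 := by omega
      subst this
      exact le_refl _

def GapOK (n : ℕ) (gs : List (List ℕ)) : Prop :=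
  gs.length = n ∧
  (∀ (t : ℕ) (g : List ℕ), gs[t]? = some g → ∀ x ∈ g, t + 1 < x ∧ x ≤ n) ∧
  (∀ i, 2 ≤ i → i ≤ n → gs.flatten.count i = 1)

theorem exists_gaps : ∀ n : ℕ, 1 ≤ n → ∀ w : List ℕ, IsTreeRep n w →
    ∃ gs, GapOK n gs ∧ w = 1 :: body 1 gs := by
  intro n
  induction n with
  | zero => omega
  | succ n ih =>
    intro _ w hw
    obtain ⟨hlen, hmem, hcount, hhead, hc5, hc6⟩ := hw
    rcases Nat.eq_zero_or_pos n with rfl | hn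
    · have h2 : w.length = 2 := by omega
      rcases List.length_eq_two.mp h2 with ⟨a, b, rfl⟩
      have ha : a = 1 := le_antisymm (hmem a (by simp)).2 (hmem a (by simp)).1
      have hb : b = 1 := le_antisymm (hmem b (by simp)).2 (hmem b (by simp)).1
      subst ha; subst hb
      refine ⟨[[]], ⟨rfl, ?_, ?_⟩, rfl⟩
      · intro t g hg x hx
        rcases t with _ | t
        · simp only [List.getElem?_cons_zero, Option.some.injEq] at hg
          subst hg
          simp at hx
        · simp at hg
      · intro i h2i h1i
        exact absurd h1i (by omega)
    · -- main case: n ≥ 1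
      have hcw : w.count (n+1) = 2 := hcount (n+1) (by omega) (le_refl _)
      have hcm : (n+1) ∈ w := List.count_pos_iff.mp (by omega)
      rcases mem_split_first hcm with ⟨D, T, rfl, hcD⟩
      have hDc0 : D.count (n+1) = 0 := List.count_eq_zero.mpr hcD
      have hcT : T.count (n+1) = 1 := by
        rw [List.count_append, List.count_cons] at hcw
        simp at hcw
        omega
      rcases count_one_split hcT with ⟨E, F, rfl, hcE, hcF⟩
      -- F = []
      have hsecc : secondOcc (D ++ (n+1) :: (E ++ (n+1) :: F)) (n+1) =
          (D ++ (n+1) :: (E ++ (n+1) :: F)).length - 1 - F.length := by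
        have hrev : (D ++ (n+1) :: (E ++ (n+1) :: F)).reverse
            = F.reverse ++ (n+1) :: (E.reverse ++ (n+1) :: D.reverse) := by simp
        have hFc : (n+1) ∉ F.reverse := by simpa using hcF
        unfold secondOcc
        rw [hrev, List.idxOf_append_of_notMem hFc, List.idxOf_cons_self]
        simp
      have hF : F = [] := by
        rcases List.eq_nil_or_concat F with rfl | ⟨F', y, rfl⟩
        · rfl
        · exfalso
          have hyw : y ∈ (D ++ (n+1) :: (E ++ (n+1) :: F'.concat y)) := by simp
          obtain ⟨hy1, hy2⟩ := hmem y hyw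
          have hrev2 : (D ++ (n+1) :: (E ++ (n+1) :: F'.concat y)).reverse
              = y :: (F'.reverse ++ (n+1) :: (E.reverse ++ (n+1) :: D.reverse)) := by simp
          have hsy : secondOcc (D ++ (n+1) :: (E ++ (n+1) :: F'.concat y)) y
              = (D ++ (n+1) :: (E ++ (n+1) :: F'.concat y)).length - 1 := by
            unfold secondOcc
            rw [hrev2, List.idxOf_cons_self]
            simp
          have hmono := secondOcc_mono hc6 hy1 hy2 (le_refl (n+1))
          have hFlen : (F'.concat y).length = F'.length + 1 := by simp
          omega
      subst hF
      -- now w = D ++ (n+1) :: (E ++ [(n+1)])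
      have hshape : D ++ (n+1) :: (E ++ (n+1) :: []) = (D ++ (n+1) :: E) ++ [n+1] := by simp
      have hD0 : D ≠ [] := by
        intro h
        subst h
        simp [List.getD] at hhead
        omega
      obtain ⟨d, D', rfl⟩ := List.exists_cons_of_ne_nil hD0
      have hd1 : d = 1 := by simpa [List.getD] using hhead
      subst hd1
      -- basic components for w₀ = (1 :: D') ++ E
      have hl0 : ((1 :: D') ++ E).length = 2 * n := by
        have h := hlen
        simp only [List.length_append, List.length_cons, List.length_nil] at h ⊢
        omega
      have hmem0 : ∀ x ∈ (1 :: D') ++ E, 1 ≤ x ∧ x ≤ n := by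
        intro x hx
        have hxw : x ∈ (1 :: D') ++ (n+1) :: (E ++ (n+1) :: []) := by
          rcases List.mem_append.mp hx with h | h
          · exact List.mem_append.mpr (Or.inl h)
          · simp [h]
        have h1 := hmem x hxw
        have hxc : x ≠ n + 1 := by
          intro h
          subst h
          rcases List.mem_append.mp hx with h | h
          · exact hcD h
          · exact hcE h
        omega
      have hcount0 : ∀ i, 1 ≤ i → i ≤ n → ((1 :: D') ++ E).count i = 2 := by
        intro i h1 h2
        have hic : ¬ (n + 1 = i) := by omega
        have := hcount i h1 (by omega)
        simp only [List.count_append, List.count_cons, List.count_nil, beq_iff_eq] at this ⊢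
        split_ifs at this ⊢ <;> omega
      have hmemw0 : ∀ i, 1 ≤ i → i ≤ n → i ∈ (1 :: D') ++ E := by
        intro i h1 h2
        have := hcount0 i h1 h2
        exact List.count_pos_iff.mp (by omega)
      have hw0 : IsTreeRep n ((1 :: D') ++ E) := by
        refine ⟨hl0, hmem0, hcount0, by simp [List.getD], ?_, ?_⟩
        · intro i h2i hin
          have h5 := hc5 i h2i (by omega)
          rw [hshape] at h5
          have hxm : i ∈ (1 :: D') ++ E := hmemw0 i (by omega) hin
          have hzm : (i-1) ∈ (1 :: D') ++ E := hmemw0 (i-1) (by omega) (by omega)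
          have hxm1 : i ∈ (1 :: D') ++ (n+1) :: E := by
            rcases List.mem_append.mp hxm with h | h
            · exact List.mem_append.mpr (Or.inl h)
            · simp [h]
          have hzc : (i - 1) ≠ n + 1 := by omega
          have e1 : firstOcc ((1 :: D' ++ (n+1) :: E) ++ [n+1]) i
              = firstOcc (1 :: D' ++ (n+1) :: E) i := appc_firstOcc _ _ _ (by simpa using hxm1)
          have hzm1 : (i-1) ∈ (1 :: D') ++ (n+1) :: E := by
            rcases List.mem_append.mp hzm with h | h
            · exact List.mem_append.mpr (Or.inl h)
            · simp [h]
          have e2 : secondOcc ((1 :: D' ++ (n+1) :: E) ++ [n+1]) (i-1)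
              = secondOcc (1 :: D' ++ (n+1) :: E) (i-1) :=
            appc_secondOcc _ _ _ hzc (by simpa using hzm1)
          have A := del_firstOcc (1 :: D') E (n+1) i (by omega) hxm
          have B := del_secondOcc (1 :: D') E (n+1) (i-1) hzc hzm
          rcases A with ⟨_, eA, bA⟩ | ⟨_, eA, bA⟩ <;> rcases B with ⟨_, eB, bB⟩ | ⟨_, eB, bB⟩ <;>
            omega
        · intro i h2i hin
          have h6 := hc6 i h2i (by omega)
          rw [hshape] at h6
          have hzm : (i-1) ∈ (1 :: D') ++ E := hmemw0 (i-1) (by omega) (by omega)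
          have hxm : i ∈ (1 :: D') ++ E := hmemw0 i (by omega) hin
          have hzc : (i - 1) ≠ n + 1 := by omega
          have hxc : i ≠ n + 1 := by omega
          have hzm1 : (i-1) ∈ (1 :: D') ++ (n+1) :: E := by
            rcases List.mem_append.mp hzm with h | h
            · exact List.mem_append.mpr (Or.inl h)
            · simp [h]
          have hxm1 : i ∈ (1 :: D') ++ (n+1) :: E := by
            rcases List.mem_append.mp hxm with h | h
            · exact List.mem_append.mpr (Or.inl h)
            · simp [h]
          have e1 : secondOcc ((1 :: D' ++ (n+1) :: E) ++ [n+1]) (i-1)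
              = secondOcc (1 :: D' ++ (n+1) :: E) (i-1) :=
            appc_secondOcc _ _ _ hzc (by simpa using hzm1)
          have e2 : secondOcc ((1 :: D' ++ (n+1) :: E) ++ [n+1]) i
              = secondOcc (1 :: D' ++ (n+1) :: E) i :=
            appc_secondOcc _ _ _ hxc (by simpa using hxm1)
          have A := del_secondOcc (1 :: D') E (n+1) (i-1) hzc hzm
          have B := del_secondOcc (1 :: D') E (n+1) i hxc hxm
          rcases A with ⟨_, eA, bA⟩ | ⟨_, eA, bA⟩ <;> rcases B with ⟨_, eB, bB⟩ | ⟨_, eB, bB⟩ <;>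
            omega
      obtain ⟨gs', ⟨hglen, hgap, hgcnt⟩, hweq⟩ := ih hn ((1 :: D') ++ E) hw0
      -- position p
      have hfc : firstOcc ((1 :: D' ++ (n+1) :: E) ++ [n+1]) (n+1) = (1 :: D').length := by
        unfold firstOcc
        rw [List.idxOf_append_of_mem (by simp), List.idxOf_append_of_notMem hcD,
          List.idxOf_cons_self]
        omega
      have h5c := hc5 (n+1) (by omega) (le_refl _)
      have hnm : n ∈ (1 :: D') ++ E := hmemw0 n (by omega) (le_refl _)
      have hnm1 : n ∈ (1 :: D') ++ (n+1) :: E := by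
        rcases List.mem_append.mp hnm with h | h
        · exact List.mem_append.mpr (Or.inl h)
        · simp [h]
      have e2 : secondOcc ((1 :: D' ++ (n+1) :: E) ++ [n+1]) n
          = secondOcc (1 :: D' ++ (n+1) :: E) n :=
        appc_secondOcc _ _ _ (by omega) (by simpa using hnm1)
      rw [hshape] at h5c
      have hns : (n + 1) - 1 = n := by omega
      rw [hns] at h5c
      have B := del_secondOcc (1 :: D') E (n+1) n (by omega) hnm
      have hple : (1 :: D').length ≤ secondOcc ((1 :: D') ++ E) n := by
        rcases B with ⟨_, eB, bB⟩ | ⟨_, eB, bB⟩ <;> omega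
      have hsle : secondOcc ((1 :: D') ++ E) n ≤ ((1 :: D') ++ E).length - 1 := by
        unfold secondOcc
        omega
      have hwl : ((1 :: D') ++ E).length = 1 + (body 1 gs').length := by
        rw [hweq]
        simp only [List.length_cons]
        omega
      have hbl : (1 :: D').length - 1 < (body 1 gs').length := by
        simp only [List.length_cons] at hwl hple hsle ⊢
        omega
      obtain ⟨gs₂, hlen₂, hbody₂, ⟨U, V, hU, hV⟩, hgaps₂⟩ :=
        insert_body (n+1) gs' 1 ((1 :: D').length - 1) hbl
      refine ⟨gs₂ ++ [[]], ⟨?_, ?_, ?_⟩, ?_⟩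
      · simp [hlen₂, hglen]
      · -- gap condition
        intro t g hg x hx
        rcases Nat.lt_or_ge t gs₂.length with ht | ht
        · rw [List.getElem?_append, if_pos ht] at hg
          obtain ⟨g0, hg0, hsub⟩ := hgaps₂ t g hg
          rcases hsub x hx with hxg0 | rfl
          · have h := hgap t g0 hg0 x hxg0
            exact ⟨h.1, by omega⟩
          · constructor
            · have : t < n := by omega
              omega
            · omega
        · rw [List.getElem?_append_right ht] at hg
          rcases hq : t - gs₂.length with _ | k
          · rw [hq] at hg
            simp only [List.getElem?_cons_zero, Option.some.injEq] at hg
            subst hg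
            simp at hx
          · rw [hq] at hg
            simp at hg
      · -- counts
        intro i h2i hin
        rw [List.flatten_append]
        have hfl : ([[]] : List (List ℕ)).flatten = [] := by simp
        rw [hfl, List.append_nil, hV, List.count_append, List.count_cons]
        have hUV : (U ++ V).count i = gs'.flatten.count i := by rw [← hU]
        rw [List.count_append] at hUV
        rcases Nat.lt_or_ge i (n+1) with hi | hi
        · have h1 := hgcnt i h2i (by omega)
          have hic : ¬ ((n+1 : ℕ) = i) := by omega
          simp only [beq_iff_eq, if_neg hic]
          omega
        · have hie : i = n + 1 := by omega
          subst hie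
          have hle : ∀ x ∈ gs'.flatten, x ≤ n := by
            intro x hxf
            obtain ⟨g, hgmem, hxg⟩ := List.mem_flatten.mp hxf
            obtain ⟨t, hgt⟩ := List.getElem?_of_mem hgmem
            exact (hgap t g hgt x hxg).2
          have hz : gs'.flatten.count (n+1) = 0 := by
            apply List.count_eq_zero.mpr
            intro hmem'
            have := hle _ hmem'
            omega
          simp only [beq_iff_eq, if_pos rfl, if_true]
          omega
      · -- w = 1 :: body 1 (gs₂ ++ [[]])
        have hb1 : body 1 (gs₂ ++ [[]]) = body 1 gs₂ ++ [n+1] := by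
          rw [body_append]
          have : body (1 + gs₂.length) [[]] = [1 + gs₂.length] := by simp [body]
          rw [this, hlen₂, hglen, Nat.add_comm 1 n]
        rw [hb1]
        have hc2 : (1 : ℕ) :: (body 1 gs₂ ++ [n+1]) = (1 :: body 1 gs₂) ++ [n+1] := by simp
        rw [hc2]
        have hc3 : (1 : ℕ) :: body 1 gs₂
            = ((1 :: D') ++ E).insertIdx (1 :: D').length (n+1) := by
          rw [hbody₂, hweq]
          have hp : (1 :: D').length = ((1 :: D').length - 1) + 1 := by simp
          rw [hp, List.insertIdx_succ_cons]
          simp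
        rw [hc3, insertIdx_decomp' E (n+1) rfl]
        simp

def fm (m : ℕ) (a b : List ℕ) : List ℕ :=
  a.filter (fun x => x ≤ m) ++ b.filter (fun x => m < x)

def fc (m : ℕ) (a b : List ℕ) : List ℕ :=
  a.filter (fun x => x < m) ++ b.filter (fun x => m < x)

def merge (m : ℕ) (A B : List (List ℕ)) : List (List ℕ) := List.zipWith (fm m) A B

lemma zip_congr {f g : List ℕ → List ℕ → List ℕ} :
    ∀ (A B : List (List ℕ)), (∀ a ∈ A, ∀ b ∈ B, f a b = g a b) →
      List.zipWith f A B = List.zipWith g A B := by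
  intro A
  induction A with
  | nil => intro B h; simp
  | cons a A ih =>
    intro B h
    cases B with
    | nil => simp
    | cons b B =>
      simp only [List.zipWith_cons_cons]
      rw [h a (by simp) b (by simp), ih B (fun a' ha' b' hb' => h a' (by simp [ha']) b' (by simp [hb']))]

lemma split_at {B : List (List ℕ)} {t : ℕ} (h : t < B.length) :
    ∃ V₁ v0 V₂, B = V₁ ++ v0 :: V₂ ∧ V₁.length = t ∧ V₂.length = B.length - t - 1 := by
  refine ⟨B.take t, B[t], B.drop (t+1), ?_, ?_, ?_⟩
  · rw [← List.drop_eq_getElem_cons h, List.take_append_drop]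
  · simp [List.length_take]; omega
  · rw [List.length_drop]; omega

lemma hop_step (n : ℕ) (A B : List (List ℕ)) (hA : GapOK n A) (hB : GapOK n B)
    (i : ℕ) (h2 : 2 ≤ i) (hin : i ≤ n) :
    IsHop n (1 :: body 1 (merge i A B)) (1 :: body 1 (merge (i-1) A B)) := by
  obtain ⟨hAl, hAgap, hAcnt⟩ := hA
  obtain ⟨hBl, hBgap, hBcnt⟩ := hB
  obtain ⟨G₁, P, Q, G₂, hAeq, hnG₁, hnP, hnQ, hnG₂⟩ := split_gaps (hAcnt i h2 hin)
  obtain ⟨H₁, R, S, H₂, hBeq, hnH₁, hnR, hnS, hnH₂⟩ := split_gaps (hBcnt i h2 hin)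
  set ta := G₁.length with hta
  set tb := H₁.length with htb
  have hAlen2 : A.length = ta + (1 + G₂.length) := by
    rw [hAeq]; simp only [List.length_append, List.length_cons]; omega
  have hBlen2 : B.length = tb + (1 + H₂.length) := by
    rw [hBeq]; simp only [List.length_append, List.length_cons]; omega
  have hAta : A[ta]? = some (P ++ i :: Q) := by
    rw [hAeq, List.getElem?_append_right (le_refl ta)]
    simp [hta]
  have hBtb : B[tb]? = some (R ++ i :: S) := by
    rw [hBeq, List.getElem?_append_right (le_refl tb)]
    simp [htb]
  have htai : ta + 1 < i := (hAgap ta _ hAta i (by simp)).1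
  have htbi : tb + 1 < i := (hBgap tb _ hBtb i (by simp)).1
  obtain ⟨V₁, v0, V₂, hBsp, hV₁, hV₂⟩ := split_at (show ta < B.length by omega)
  obtain ⟨U₁, u0, U₂, hAsp, hU₁, hU₂⟩ := split_at (show tb < A.length by omega)
  have hV₂' : V₂.length = G₂.length := by omega
  have hU₂' : U₂.length = H₂.length := by omega
  -- flatten membership helpers
  have hmemG₁ : ∀ a ∈ G₁, ∀ x ∈ a, x ≠ i := by
    intro a ha x hx hxe
    exact hnG₁ (List.mem_flatten.mpr ⟨a, ha, hxe ▸ hx⟩)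
  have hmemG₂ : ∀ a ∈ G₂, ∀ x ∈ a, x ≠ i := by
    intro a ha x hx hxe
    exact hnG₂ (List.mem_flatten.mpr ⟨a, ha, hxe ▸ hx⟩)
  have hmemH₁ : ∀ b ∈ H₁, ∀ x ∈ b, x ≠ i := by
    intro b hb x hx hxe
    exact hnH₁ (List.mem_flatten.mpr ⟨b, hb, hxe ▸ hx⟩)
  have hmemH₂ : ∀ b ∈ H₂, ∀ x ∈ b, x ≠ i := by
    intro b hb x hx hxe
    exact hnH₂ (List.mem_flatten.mpr ⟨b, hb, hxe ▸ hx⟩)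
  -- the decomposition of merge i A B
  have hmAB : merge i A B = List.zipWith (fm i) G₁ V₁
      ++ fm i (P ++ i :: Q) v0 :: List.zipWith (fm i) G₂ V₂ := by
    rw [merge, hAeq, hBsp, List.zipWith_append (by omega), List.zipWith_cons_cons]
  have hgap1 : fm i (P ++ i :: Q) v0 = P.filter (fun x => x ≤ i)
      ++ i :: (Q.filter (fun x => x ≤ i) ++ v0.filter (fun x => i < x)) := by
    simp only [fm, List.filter_append, List.filter_cons]
    simp
  have hZ₁len : (List.zipWith (fm i) G₁ V₁).length = ta := by
    simp only [List.length_zipWith]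
    omega
  set X : List ℕ := 1 :: (body 1 (List.zipWith (fm i) G₁ V₁) ++ P.filter (fun x => x ≤ i))
    with hX
  set Y : List ℕ := (Q.filter (fun x => x ≤ i) ++ v0.filter (fun x => i < x))
      ++ (1 + ta) :: body (1 + ta + 1) (List.zipWith (fm i) G₂ V₂) with hY
  have hgexp : 1 :: body 1 (merge i A B) = X ++ i :: Y := by
    rw [hmAB, body_append, hZ₁len]
    show _ :: (_ ++ (fm i (P ++ i :: Q) v0 ++ (1 + ta) :: body (1 + ta + 1) _)) = _
    rw [hgap1, hX, hY]
    simp [List.append_assoc]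
  -- decomposition of merge (i-1) A B
  have hm'AB : merge (i-1) A B = List.zipWith (fm (i-1)) U₁ H₁
      ++ fm (i-1) u0 (R ++ i :: S) :: List.zipWith (fm (i-1)) U₂ H₂ := by
    rw [merge, hAsp, hBeq, List.zipWith_append (by omega), List.zipWith_cons_cons]
  have hgap2 : fm (i-1) u0 (R ++ i :: S) = (u0.filter (fun x => x ≤ i - 1)
      ++ R.filter (fun x => i - 1 < x)) ++ i :: S.filter (fun x => i - 1 < x) := by
    simp only [fm, List.filter_append, List.filter_cons]
    rw [if_pos (by simp; omega)]
    simp [List.append_assoc]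
  have hW₁len : (List.zipWith (fm (i-1)) U₁ H₁).length = tb := by
    simp only [List.length_zipWith]
    omega
  set X' : List ℕ := 1 :: (body 1 (List.zipWith (fm (i-1)) U₁ H₁)
      ++ (u0.filter (fun x => x ≤ i - 1) ++ R.filter (fun x => i - 1 < x))) with hX'
  set Y' : List ℕ := S.filter (fun x => i - 1 < x)
      ++ (1 + tb) :: body (1 + tb + 1) (List.zipWith (fm (i-1)) U₂ H₂) with hY'
  have hg'exp : 1 :: body 1 (merge (i-1) A B) = X' ++ i :: Y' := by
    rw [hm'AB, body_append, hW₁len]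
    show _ :: (_ ++ (fm (i-1) u0 (R ++ i :: S) ++ (1 + tb) :: body (1 + tb + 1) _)) = _
    rw [hgap2, hX', hY']
    simp [List.append_assoc]
  -- the common core
  have hcore : X ++ Y = X' ++ Y' := by
    have c1 : List.zipWith (fm i) G₁ V₁ = List.zipWith (fc i) G₁ V₁ := by
      apply zip_congr
      intro a ha b _
      simp only [fm, fc]
      congr 1
      apply List.filter_congr
      intro x hx
      have := hmemG₁ a ha x hx
      simp only [decide_eq_decide]
      omega
    have c2 : List.zipWith (fm i) G₂ V₂ = List.zipWith (fc i) G₂ V₂ := by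
      apply zip_congr
      intro a ha b _
      simp only [fm, fc]
      congr 1
      apply List.filter_congr
      intro x hx
      have := hmemG₂ a ha x hx
      simp only [decide_eq_decide]
      omega
    have c3 : List.zipWith (fm (i-1)) U₁ H₁ = List.zipWith (fc i) U₁ H₁ := by
      apply zip_congr
      intro a _ b hb
      simp only [fm, fc]
      congr 1
      · apply List.filter_congr
        intro x _
        simp only [decide_eq_decide]
        omega
      · apply List.filter_congr
        intro x hx
        have := hmemH₁ b hb x hx
        simp only [decide_eq_decide]
        omega
    have c4 : List.zipWith (fm (i-1)) U₂ H₂ = List.zipWith (fc i) U₂ H₂ := by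
      apply zip_congr
      intro a _ b hb
      simp only [fm, fc]
      congr 1
      · apply List.filter_congr
        intro x _
        simp only [decide_eq_decide]
        omega
      · apply List.filter_congr
        intro x hx
        have := hmemH₂ b hb x hx
        simp only [decide_eq_decide]
        omega
    have cP : P.filter (fun x => x ≤ i) = P.filter (fun x => x < i) := by
      apply List.filter_congr
      intro x hx
      have : x ≠ i := fun h => hnP (h ▸ hx)
      simp only [decide_eq_decide]
      omega
    have cQ : Q.filter (fun x => x ≤ i) = Q.filter (fun x => x < i) := by
      apply List.filter_congr
      intro x hx
      have : x ≠ i := fun h => hnQ (h ▸ hx)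
      simp only [decide_eq_decide]
      omega
    have cu0 : u0.filter (fun x => x ≤ i - 1) = u0.filter (fun x => x < i) := by
      apply List.filter_congr
      intro x _
      simp only [decide_eq_decide]
      omega
    have cR : R.filter (fun x => i - 1 < x) = R.filter (fun x => i < x) := by
      apply List.filter_congr
      intro x hx
      have : x ≠ i := fun h => hnR (h ▸ hx)
      simp only [decide_eq_decide]
      omega
    have cS : S.filter (fun x => i - 1 < x) = S.filter (fun x => i < x) := by
      apply List.filter_congr
      intro x hx
      have : x ≠ i := fun h => hnS (h ▸ hx)
      simp only [decide_eq_decide]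
      omega
    -- core expansion from the A-side split
    have hcAB : List.zipWith (fc i) A B = List.zipWith (fc i) G₁ V₁
        ++ fc i (P ++ i :: Q) v0 :: List.zipWith (fc i) G₂ V₂ := by
      rw [hAeq, hBsp, List.zipWith_append (by omega), List.zipWith_cons_cons]
    have hcAB' : List.zipWith (fc i) A B = List.zipWith (fc i) U₁ H₁
        ++ fc i u0 (R ++ i :: S) :: List.zipWith (fc i) U₂ H₂ := by
      rw [hAsp, hBeq, List.zipWith_append (by omega), List.zipWith_cons_cons]
    have hgapc : fc i (P ++ i :: Q) v0 = P.filter (fun x => x < i)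
        ++ (Q.filter (fun x => x < i) ++ v0.filter (fun x => i < x)) := by
      simp only [fc, List.filter_append, List.filter_cons]
      rw [if_neg (by simp)]
      try simp [List.append_assoc]
    have hgapc' : fc i u0 (R ++ i :: S) = u0.filter (fun x => x < i)
        ++ (R.filter (fun x => i < x) ++ S.filter (fun x => i < x)) := by
      simp only [fc, List.filter_append, List.filter_cons]
      rw [if_neg (by simp)]
      try simp [List.append_assoc]
    have hZ₁clen : (List.zipWith (fc i) G₁ V₁).length = ta := by
      simp only [List.length_zipWith]; omega
    have hW₁clen : (List.zipWith (fc i) U₁ H₁).length = tb := by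
      simp only [List.length_zipWith]; omega
    have e1 : X ++ Y = 1 :: body 1 (List.zipWith (fc i) A B) := by
      rw [hcAB, body_append, hZ₁clen]
      show _ = _ :: (_ ++ (fc i (P ++ i :: Q) v0 ++ (1 + ta) :: body (1 + ta + 1) _))
      rw [hgapc, hX, hY, c1, c2, cP, cQ]
      simp [List.append_assoc]
    have e2 : X' ++ Y' = 1 :: body 1 (List.zipWith (fc i) A B) := by
      rw [hcAB', body_append, hW₁clen]
      show _ = _ :: (_ ++ (fc i u0 (R ++ i :: S) ++ (1 + tb) :: body (1 + tb + 1) _))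
      rw [hgapc', hX', hY', c3, c4, cu0, cR, cS]
      simp [List.append_assoc]
    rw [e1, e2]
  -- i ∉ X
  have hiX : i ∉ X := by
    rw [hX]
    simp only [List.mem_cons, List.mem_append, not_or]
    refine ⟨by omega, ?_, ?_⟩
    · intro hmem'
      rcases mem_body _ _ _ hmem' with ⟨g, hgZ, hig⟩ | ⟨h1', h2'⟩
      · obtain ⟨a, b, ha, hb, rfl⟩ := mem_zipWith hgZ
        simp only [fm, List.mem_append, List.mem_filter] at hig
        rcases hig with ⟨hia, _⟩ | ⟨_, hlt⟩
        · exact hmemG₁ a ha i hia rfl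
        · simp at hlt
      · rw [hZ₁len] at h2'
        omega
    · intro hmem'
      exact hnP (List.mem_of_mem_filter hmem')
  -- i - 1 ∈ Y'
  have hi1Y' : (i - 1) ∈ Y' := by
    rw [hY']
    by_cases he : i - 1 = 1 + tb
    · simp [he]
    · have hW₂len : (List.zipWith (fm (i-1)) U₂ H₂).length = H₂.length := by
        simp only [List.length_zipWith]; omega
      have hmem' : (i - 1) ∈ body (1 + tb + 1) (List.zipWith (fm (i-1)) U₂ H₂) := by
        apply mem_body_skel
        · omega
        · rw [hW₂len]; omega
      simp [hmem']
  -- assemble the hop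
  refine ⟨i, X'.length, h2, hin, ?_, ?_, ?_⟩
  · rw [hX']; simp
  · rw [hgexp, erase_decomp _ _ _ hiX, hcore]
    exact secondOcc_ge X' Y' (i-1) hi1Y'
  · rw [hgexp, erase_decomp _ _ _ hiX, hcore, insertIdx_decomp, hg'exp]

lemma gap_elems {n : ℕ} {A : List (List ℕ)} (hA : GapOK n A) :
    ∀ a ∈ A, ∀ x ∈ a, 1 < x ∧ x ≤ n := by
  intro a ha x hx
  obtain ⟨t, ht⟩ := List.getElem?_of_mem ha
  have h := hA.2.1 t a ht x hx
  omega

lemma zip_id_left (m : ℕ) : ∀ (A B : List (List ℕ)), A.length = B.length →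
    (∀ a ∈ A, ∀ x ∈ a, x ≤ m) → (∀ b ∈ B, ∀ x ∈ b, ¬ m < x) → merge m A B = A := by
  intro A
  induction A with
  | nil => intro B _ _ _; simp [merge]
  | cons a A ih =>
    intro B h ha hb
    cases B with
    | nil => simp at h
    | cons b B =>
      show fm m a b :: merge m A B = a :: A
      rw [ih B (by simpa using h) (fun a' ha' => ha a' (by simp [ha']))
        (fun b' hb' => hb b' (by simp [hb']))]
      congr 1
      simp only [fm]
      rw [List.filter_eq_self.mpr (fun x hx => decide_eq_true (ha a (by simp) x hx)),
        List.filter_eq_nil_iff.mpr (fun x hx => by simpa using hb b (by simp) x hx)]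
      simp

lemma zip_id_right (m : ℕ) : ∀ (A B : List (List ℕ)), A.length = B.length →
    (∀ a ∈ A, ∀ x ∈ a, ¬ x ≤ m) → (∀ b ∈ B, ∀ x ∈ b, m < x) → merge m A B = B := by
  intro A
  induction A with
  | nil =>
    intro B h _ _
    cases B with
    | nil => simp [merge]
    | cons b B => simp at h
  | cons a A ih =>
    intro B h ha hb
    cases B with
    | nil => simp at h
    | cons b B =>
      show fm m a b :: merge m A B = b :: B
      rw [ih B (by simpa using h) (fun a' ha' => ha a' (by simp [ha']))
        (fun b' hb' => hb b' (by simp [hb']))]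
      congr 1
      simp only [fm]
      rw [List.filter_eq_nil_iff.mpr (fun x hx => by simpa using ha a (by simp) x hx),
        List.filter_eq_self.mpr (fun x hx => decide_eq_true (hb b (by simp) x hx))]
      simp

end TreeRepAux

/-- For `n ≥ 2` and tree representations `u, v` on `{1,…,n}`, `d(u,v) ≤ n`:
the diameter of the space of tree representations under HOPs is at most `n`. -/
theorem stmt15 (n : ℕ) (hn : 2 ≤ n) (u v : List ℕ)
    (hu : IsTreeRep n u) (hv : IsTreeRep n v) :
    hopDist n u v ≤ n := by
  open TreeRepAux in
  obtain ⟨A, hA, huA⟩ := TreeRepAux.exists_gaps n (by omega) u hu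
  obtain ⟨B, hB, hvB⟩ := TreeRepAux.exists_gaps n (by omega) v hv
  have hAel := TreeRepAux.gap_elems hA
  have hBel := TreeRepAux.gap_elems hB
  have hchain : HopChain n (n - 1) u v := by
    refine ⟨fun j => 1 :: TreeRepAux.body 1 (TreeRepAux.merge (n - j) A B), ?_, ?_, ?_⟩
    · show 1 :: TreeRepAux.body 1 (TreeRepAux.merge (n - 0) A B) = u
      have hm : TreeRepAux.merge (n - 0) A B = A := by
        apply TreeRepAux.zip_id_left
        · rw [hA.1, hB.1]
        · intro a ha x hx
          have := hAel a ha x hx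
          omega
        · intro b hb x hx
          have := hBel b hb x hx
          omega
      rw [hm, ← huA]
    · show 1 :: TreeRepAux.body 1 (TreeRepAux.merge (n - (n - 1)) A B) = v
      have hm1 : n - (n - 1) = 1 := by omega
      have hm : TreeRepAux.merge (n - (n - 1)) A B = B := by
        rw [hm1]
        apply TreeRepAux.zip_id_right
        · rw [hA.1, hB.1]
        · intro a ha x hx
          have := hAel a ha x hx
          omega
        · intro b hb x hx
          have := hBel b hb x hx
          omega
      rw [hm, ← hvB]
    · intro j hj
      have hstep := TreeRepAux.hop_step n A B hA hB (n - j) (by omega) (by omega)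
      have he : n - (j + 1) = (n - j) - 1 := by omega
      show IsHop n (1 :: TreeRepAux.body 1 (TreeRepAux.merge (n - j) A B))
        (1 :: TreeRepAux.body 1 (TreeRepAux.merge (n - (j + 1)) A B))
      rw [he]
      exact hstep
  have h1 : hopDist n u v ≤ n - 1 := Nat.sInf_le hchain
  omega
end

section
/- Let n ≥ 2 and let v be a tree representation on {1,…,n}. Then the graph G(v) produced by the decoding algorithm, with vertex set {1,…,2n}, is a tree (it is connected and has exactly 2n−1 edges), and each of the vertices 1,…,n and the vertex n+1 has degree 1 in G(v). -/
/-- `v_j` (0-indexed) is the first occurrence of its value in `v`. -/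
def isFirstAt (v : List ℕ) (j : ℕ) : Bool := v.idxOf (v.getD j 0) == j

/-- The edge produced by step `j` (0-indexed, corresponding to the pair of
consecutive entries `v_j, v_{j+1}`) of the decoding algorithm: writing `a, b`
for the values of these two entries, it is `{n+a, n+b}` if both are first
occurrences, `{n+a, b}` if only the first is, `{n+v_{j'}, n+b}` (where `j'` is
the smallest index `> j+1` whose entry is a second occurrence) if only the
second is, and `{n+b, b}` if both are second occurrences. -/
noncomputable def decodeEdge (n : ℕ) (v : List ℕ) (j : ℕ) : Sym2 ℕ :=
  let a := v.getD j 0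
  let b := v.getD (j + 1) 0
  if isFirstAt v j then
    if isFirstAt v (j + 1) then s(n + a, n + b) else s(n + a, b)
  else
    if isFirstAt v (j + 1) then
      s(n + v.getD (sInf {k | j + 1 < k ∧ k < v.length ∧ isFirstAt v k = false}) 0, n + b)
    else s(n + b, b)

/-- The edge set of the graph `G(v)` produced by the decoding algorithm. -/
noncomputable def decodeEdges (n : ℕ) (v : List ℕ) : Finset (Sym2 ℕ) :=
  (Finset.range (2 * n - 1)).image (decodeEdge n v)

/-- The graph `G(v)` produced by the decoding algorithm (as a simple graph on
`ℕ`; its relevant vertices are `{1,…,2n}`). -/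
noncomputable def decodeGraph (n : ℕ) (v : List ℕ) : SimpleGraph ℕ :=
  SimpleGraph.fromEdgeSet ↑(decodeEdges n v)

namespace Aux


lemma indexOf_le_of_getElem {l : List ℕ} {x k : ℕ} (hk : k < l.length) (h : l[k] = x) :
    l.idxOf x ≤ k := by
  by_contra hlt
  push_neg at hlt
  have := List.not_of_lt_findIdx (p := (· == x)) (xs := l) hlt
  simp [h] at this

lemma firstOcc_le {l : List ℕ} {x k : ℕ} (hk : k < l.length) (h : l.getD k 0 = x) :
    firstOcc l x ≤ k :=
  indexOf_le_of_getElem hk (by rw [List.getD_eq_getElem _ _ hk] at h; exact h)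

lemma firstOcc_lt_length {l : List ℕ} {x : ℕ} (h : x ∈ l) : firstOcc l x < l.length :=
  List.idxOf_lt_length_iff.2 h

lemma getD_firstOcc {l : List ℕ} {x : ℕ} (h : x ∈ l) : l.getD (firstOcc l x) 0 = x := by
  rw [List.getD_eq_getElem _ _ (firstOcc_lt_length h)]
  exact List.getElem_idxOf _

lemma secondOcc_lt_length {l : List ℕ} {x : ℕ} (h : x ∈ l) : secondOcc l x < l.length := by
  have h1 : l.reverse.idxOf x < l.length := by
    rw [← List.length_reverse]; exact List.idxOf_lt_length_iff.2 (by simpa using h)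
  have : 0 < l.length := lt_of_le_of_lt (Nat.zero_le _) h1
  unfold secondOcc; omega

lemma getD_secondOcc {l : List ℕ} {x : ℕ} (h : x ∈ l) : l.getD (secondOcc l x) 0 = x := by
  have hm : x ∈ l.reverse := by simpa using h
  have h1 : l.reverse.idxOf x < l.reverse.length := List.idxOf_lt_length_iff.2 hm
  have h2 := List.getElem_idxOf h1
  rw [List.getElem_reverse] at h2
  rw [List.getD_eq_getElem _ _ (secondOcc_lt_length h)]
  exact h2

lemma le_secondOcc {l : List ℕ} {x k : ℕ} (hk : k < l.length) (h : l.getD k 0 = x) :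
    k ≤ secondOcc l x := by
  rw [List.getD_eq_getElem _ _ hk] at h
  have hrk : l.length - 1 - k < l.reverse.length := by simp; omega
  have : l.reverse[l.length - 1 - k] = x := by
    rw [List.getElem_reverse]
    have heq : l.length - 1 - (l.length - 1 - k) = k := by omega
    simp_rw [heq]; exact h
  have h2 : l.reverse.idxOf x ≤ l.length - 1 - k :=
    indexOf_le_of_getElem hrk this
  unfold secondOcc; omega

lemma count_eq_length_filter (l : List ℕ) (x : ℕ) :
    ((List.range l.length).filter fun k => l.getD k 0 = x).length = l.count x := by
  induction l with
  | nil => simp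
  | cons a t ih =>
    have hcomp : (List.filter ((fun k => decide ((a :: t).getD k 0 = x)) ∘ Nat.succ)
        (List.range t.length)) =
        List.filter (fun k => decide (t.getD k 0 = x)) (List.range t.length) :=
      List.filter_congr (by intro k _; simp [List.getD_cons_succ])
    rw [List.length_cons, List.range_succ_eq_map, List.filter_cons, List.filter_map, hcomp,
      List.count_cons]
    by_cases hax : a = x
    · rw [if_pos (by simp [hax]), List.length_cons, List.length_map, ih]; simp [hax]
    · rw [if_neg (by simp [hax]), List.length_map, ih]; simp [hax]

lemma pos_eq_of_count_two {l : List ℕ} {x : ℕ} (h : l.count x = 2) :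
    ∀ k, k < l.length → (l.getD k 0 = x ↔ k = firstOcc l x ∨ k = secondOcc l x) := by
  have hmem : x ∈ l := by
    rw [← List.count_pos_iff]; omega
  have hf := getD_firstOcc hmem
  have hs := getD_secondOcc hmem
  have hflt := firstOcc_lt_length hmem
  have hslt := secondOcc_lt_length hmem
  set L := (List.range l.length).filter fun k => l.getD k 0 = x with hL
  have hlen : L.length = 2 := by rw [hL, count_eq_length_filter, h]
  have hmemL : ∀ k, k ∈ L ↔ k < l.length ∧ l.getD k 0 = x := by
    intro k; rw [hL, List.mem_filter, List.mem_range]; simp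
  obtain ⟨p, q, hpq⟩ := List.length_eq_two.1 hlen
  have hnd : L.Nodup := List.Nodup.filter _ List.nodup_range
  have hpq' : p ≠ q := by
    rw [hpq] at hnd; simp at hnd; exact hnd
  have hfL : firstOcc l x ∈ L := (hmemL _).2 ⟨hflt, hf⟩
  have hsL : secondOcc l x ∈ L := (hmemL _).2 ⟨hslt, hs⟩
  have hbound : ∀ k ∈ L, firstOcc l x ≤ k ∧ k ≤ secondOcc l x := by
    intro k hk
    obtain ⟨hk1, hk2⟩ := (hmemL k).1 hk
    exact ⟨firstOcc_le hk1 hk2, le_secondOcc hk1 hk2⟩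
  have hfs : firstOcc l x ≠ secondOcc l x := by
    intro heq
    have hp := hbound p (by rw [hpq]; simp)
    have hq := hbound q (by rw [hpq]; simp)
    apply hpq'; omega
  intro k hk
  constructor
  · intro hkx
    have hkL : k ∈ L := (hmemL k).2 ⟨hk, hkx⟩
    have hmempq : ∀ m, m ∈ L → m = p ∨ m = q := by
      intro m hm; rw [hpq] at hm; simpa using hm
    rcases hmempq _ hfL with hf1 | hf1 <;> rcases hmempq _ hsL with hs1 | hs1 <;>
      rcases hmempq _ hkL with hk1 | hk1 <;> omega
  · rintro (rfl | rfl)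
    · exact hf
    · exact hs

lemma firstOcc_lt_secondOcc {l : List ℕ} {x : ℕ} (h : l.count x = 2) :
    firstOcc l x < secondOcc l x := by
  have hmem : x ∈ l := by rw [← List.count_pos_iff]; omega
  have hf := getD_firstOcc hmem
  have hflt := firstOcc_lt_length hmem
  have hle := le_secondOcc hflt hf
  rcases Nat.lt_or_ge (firstOcc l x) (secondOcc l x) with h1 | h1
  · exact h1
  · exfalso
    set L := (List.range l.length).filter fun k => l.getD k 0 = x with hL
    have hlen : L.length = 2 := by rw [hL, count_eq_length_filter, h]
    obtain ⟨p, q, hpq⟩ := List.length_eq_two.1 hlen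
    have hnd : L.Nodup := List.Nodup.filter _ List.nodup_range
    have hpq' : p ≠ q := by rw [hpq] at hnd; simp at hnd; exact hnd
    have hbound : ∀ k ∈ L, firstOcc l x ≤ k ∧ k ≤ secondOcc l x := by
      intro k hk
      rw [hL, List.mem_filter, List.mem_range] at hk
      obtain ⟨hk1, hk2⟩ := hk
      simp only [decide_eq_true_eq] at hk2
      exact ⟨firstOcc_le hk1 hk2, le_secondOcc hk1 hk2⟩
    have hp := hbound p (by rw [hpq]; simp)
    have hq := hbound q (by rw [hpq]; simp)
    apply hpq'; omega


section TreeRep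

variable {n : ℕ} {v : List ℕ}

lemma tr_len (hv : IsTreeRep n v) : v.length = 2 * n := hv.1

lemma tr_bounds (hv : IsTreeRep n v) {j : ℕ} (hj : j < 2 * n) :
    1 ≤ v.getD j 0 ∧ v.getD j 0 ≤ n := by
  have hj' : j < v.length := by rw [tr_len hv]; exact hj
  have : v.getD j 0 ∈ v := by
    rw [List.getD_eq_getElem _ _ hj']; exact List.getElem_mem _
  exact hv.2.1 _ this

lemma tr_count (hv : IsTreeRep n v) {x : ℕ} (h1 : 1 ≤ x) (h2 : x ≤ n) : v.count x = 2 :=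
  hv.2.2.1 x h1 h2

lemma tr_mem (hv : IsTreeRep n v) {x : ℕ} (h1 : 1 ≤ x) (h2 : x ≤ n) : x ∈ v := by
  rw [← List.count_pos_iff]; rw [tr_count hv h1 h2]; omega

lemma tr_pos_iff (hv : IsTreeRep n v) {x : ℕ} (h1 : 1 ≤ x) (h2 : x ≤ n) {k : ℕ}
    (hk : k < 2 * n) : v.getD k 0 = x ↔ k = firstOcc v x ∨ k = secondOcc v x :=
  pos_eq_of_count_two (tr_count hv h1 h2) k (by rw [tr_len hv]; exact hk)

lemma tr_F_lt_S (hv : IsTreeRep n v) {x : ℕ} (h1 : 1 ≤ x) (h2 : x ≤ n) :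
    firstOcc v x < secondOcc v x := firstOcc_lt_secondOcc (tr_count hv h1 h2)

lemma tr_S_lt (hv : IsTreeRep n v) {x : ℕ} (h1 : 1 ≤ x) (h2 : x ≤ n) :
    secondOcc v x < 2 * n := by
  rw [← tr_len hv]; exact secondOcc_lt_length (tr_mem hv h1 h2)

lemma tr_F_lt (hv : IsTreeRep n v) {x : ℕ} (h1 : 1 ≤ x) (h2 : x ≤ n) :
    firstOcc v x < 2 * n := by
  rw [← tr_len hv]; exact firstOcc_lt_length (tr_mem hv h1 h2)

lemma tr_getD_F (hv : IsTreeRep n v) {x : ℕ} (h1 : 1 ≤ x) (h2 : x ≤ n) :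
    v.getD (firstOcc v x) 0 = x := getD_firstOcc (tr_mem hv h1 h2)

lemma tr_getD_S (hv : IsTreeRep n v) {x : ℕ} (h1 : 1 ≤ x) (h2 : x ≤ n) :
    v.getD (secondOcc v x) 0 = x := getD_secondOcc (tr_mem hv h1 h2)

lemma isFirstAt_iff {j : ℕ} : isFirstAt v j = true ↔ firstOcc v (v.getD j 0) = j := by
  simp [isFirstAt, firstOcc]

lemma tr_isFirst_F (hv : IsTreeRep n v) {x : ℕ} (h1 : 1 ≤ x) (h2 : x ≤ n) :
    isFirstAt v (firstOcc v x) = true := by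
  rw [isFirstAt_iff, tr_getD_F hv h1 h2]

lemma tr_isFirst_S (hv : IsTreeRep n v) {x : ℕ} (h1 : 1 ≤ x) (h2 : x ≤ n) :
    isFirstAt v (secondOcc v x) = false := by
  rw [Bool.eq_false_iff]
  intro hc
  rw [isFirstAt_iff, tr_getD_S hv h1 h2] at hc
  have := tr_F_lt_S hv h1 h2
  omega

lemma tr_eq_F_of_first (hv : IsTreeRep n v) {j : ℕ} (hj : j < 2 * n)
    (h : isFirstAt v j = true) : j = firstOcc v (v.getD j 0) :=
  (isFirstAt_iff.1 h).symm

lemma tr_eq_S_of_not_first (hv : IsTreeRep n v) {j : ℕ} (hj : j < 2 * n)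
    (h : isFirstAt v j = false) : j = secondOcc v (v.getD j 0) := by
  obtain ⟨h1, h2⟩ := tr_bounds hv hj
  rcases (tr_pos_iff hv h1 h2 hj).1 rfl with hF | hS
  · exfalso
    rw [Bool.eq_false_iff] at h
    exact h (isFirstAt_iff.2 hF.symm)
  · exact hS

lemma tr_S_mono (hv : IsTreeRep n v) :
    ∀ b, b ≤ n → ∀ a, 1 ≤ a → a < b → secondOcc v a < secondOcc v b := by
  intro b
  induction b with
  | zero => omega
  | succ m ih =>
    intro hbn a ha1 hab
    have hstep : secondOcc v m < secondOcc v (m + 1) := by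
      have := hv.2.2.2.2.2 (m + 1) (by omega) hbn
      simpa using this
    rcases Nat.lt_or_ge a m with h | h
    · exact lt_trans (ih (by omega) a ha1 h) hstep
    · have : a = m := by omega
      rw [this]; exact hstep

lemma tr_S_mono_le (hv : IsTreeRep n v) {a b : ℕ} (ha : 1 ≤ a) (hab : a ≤ b) (hb : b ≤ n) :
    secondOcc v a ≤ secondOcc v b := by
  rcases Nat.lt_or_ge a b with h | h
  · exact le_of_lt (tr_S_mono hv b hb a ha h)
  · have : a = b := by omega
    rw [this]

lemma tr_F1 (hv : IsTreeRep n v) (hn : 1 ≤ n) : firstOcc v 1 = 0 := by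
  have h0 : (0:ℕ) < v.length := by rw [tr_len hv]; omega
  have := firstOcc_le h0 hv.2.2.2.1
  omega

lemma tr_S_last (hv : IsTreeRep n v) (hn : 1 ≤ n) : secondOcc v n = 2 * n - 1 := by
  have hk : 2 * n - 1 < 2 * n := by omega
  obtain ⟨h1, h2⟩ := tr_bounds hv hk
  set x := v.getD (2 * n - 1) 0 with hx
  rcases (tr_pos_iff hv h1 h2 hk).1 rfl with hF | hS
  · exfalso
    have := tr_F_lt_S hv h1 h2
    have := tr_S_lt hv h1 h2
    omega
  · have hle : secondOcc v x ≤ secondOcc v n := tr_S_mono_le hv h1 h2 (le_refl n)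
    have hSn := tr_S_lt hv (show 1 ≤ n from hn) (le_refl n)
    omega

lemma tr_S_pos (hv : IsTreeRep n v) {x : ℕ} (h1 : 1 ≤ x) (h2 : x ≤ n) :
    1 ≤ secondOcc v x := by
  have := tr_F_lt_S hv h1 h2; omega

lemma tr_F_pos (hv : IsTreeRep n v) {b : ℕ} (hb2 : 2 ≤ b) (hbn : b ≤ n) :
    1 ≤ firstOcc v b := by
  rcases Nat.eq_zero_or_pos (firstOcc v b) with h | h
  · exfalso
    have := tr_getD_F hv (by omega : 1 ≤ b) hbn
    rw [h, hv.2.2.2.1] at this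
    omega
  · exact h

lemma tr_F_ub (hv : IsTreeRep n v) {b : ℕ} (hb2 : 2 ≤ b) (hbn : b ≤ n) :
    firstOcc v b < 2 * n - 2 := by
  have h5 := hv.2.2.2.2.1 b hb2 hbn
  have hb1 : 1 ≤ b - 1 := by omega
  have hSn := tr_S_last hv (by omega : 1 ≤ n)
  rcases Nat.lt_or_ge (b - 1) n with h | h
  · have := tr_S_mono hv n (le_refl n) (b-1) hb1 h
    omega
  · omega

lemma tr_F5 (hv : IsTreeRep n v) {b : ℕ} (hb2 : 2 ≤ b) (hbn : b ≤ n) :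
    firstOcc v b < secondOcc v (b - 1) := hv.2.2.2.2.1 b hb2 hbn

lemma tr_sInf_eq (hv : IsTreeRep n v) (hn : 2 ≤ n) {j d : ℕ} (hj : j < 2 * n - 1)
    (hd1 : 1 ≤ d) (hdn : d ≤ n) (hjd : j = secondOcc v d)
    (hfirst : isFirstAt v (j + 1) = true) :
    d + 1 ≤ n ∧
    sInf {k | j + 1 < k ∧ k < v.length ∧ isFirstAt v k = false} = secondOcc v (d + 1) := by
  have hSn := tr_S_last hv (by omega : 1 ≤ n)
  have hdn' : d < n := by
    rcases Nat.lt_or_ge d n with h | h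
    · exact h
    · exfalso
      have : d = n := by omega
      rw [this] at hjd; omega
  have hd1n : 1 ≤ d + 1 := by omega
  have hd2n : d + 1 ≤ n := by omega
  have hmem : secondOcc v (d + 1) ∈
      {k | j + 1 < k ∧ k < v.length ∧ isFirstAt v k = false} := by
    refine ⟨?_, ?_, tr_isFirst_S hv hd1n hd2n⟩
    · have hlt : secondOcc v d < secondOcc v (d + 1) := tr_S_mono hv (d+1) hd2n d hd1 (by omega)
      have hne : secondOcc v (d + 1) ≠ j + 1 := by
        intro hc
        have := tr_isFirst_S hv hd1n hd2n
        rw [hc] at this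
        rw [this] at hfirst
        exact absurd hfirst (by simp)
      omega
    · rw [tr_len hv]; exact tr_S_lt hv hd1n hd2n
  have hlb : ∀ k ∈ {k | j + 1 < k ∧ k < v.length ∧ isFirstAt v k = false},
      secondOcc v (d + 1) ≤ k := by
    rintro k ⟨hk1, hk2, hk3⟩
    rw [tr_len hv] at hk2
    obtain ⟨hc1, hc2⟩ := tr_bounds hv hk2
    set c := v.getD k 0 with hc
    have hkS : k = secondOcc v c := tr_eq_S_of_not_first hv hk2 hk3
    have hcd : d < c := by
      by_contra hle
      push_neg at hle
      have := tr_S_mono_le hv hc1 hle hdn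
      omega
    have : secondOcc v (d+1) ≤ secondOcc v c := tr_S_mono_le hv hd1n (by omega) hc2
    omega
  refine ⟨hd2n, ?_⟩
  apply le_antisymm
  · exact Nat.sInf_le hmem
  · exact hlb _ (Nat.sInf_mem ⟨_, hmem⟩)

def childV (n : ℕ) (v : List ℕ) (j : ℕ) : ℕ :=
  if isFirstAt v (j + 1) then n + v.getD (j + 1) 0 else v.getD (j + 1) 0

lemma childV_first (hv : IsTreeRep n v) (hn : 2 ≤ n) {j : ℕ} (hj : j < 2 * n - 1)
    (h : isFirstAt v (j + 1) = true) :
    childV n v j = n + v.getD (j + 1) 0 ∧ 2 ≤ v.getD (j + 1) 0 ∧ v.getD (j + 1) 0 ≤ n ∧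
      j + 1 = firstOcc v (v.getD (j + 1) 0) := by
  have hj1 : j + 1 < 2 * n := by omega
  obtain ⟨h1, h2⟩ := tr_bounds hv hj1
  have hF : j + 1 = firstOcc v (v.getD (j + 1) 0) := tr_eq_F_of_first hv hj1 h
  refine ⟨by simp [childV, h], ?_, h2, hF⟩
  rcases Nat.lt_or_ge (v.getD (j + 1) 0) 2 with hlt | hge
  · exfalso
    have hx1 : v.getD (j + 1) 0 = 1 := by omega
    rw [hx1] at hF
    rw [tr_F1 hv (by omega)] at hF
    omega
  · exact hge

lemma childV_second (hv : IsTreeRep n v) (hn : 2 ≤ n) {j : ℕ} (hj : j < 2 * n - 1)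
    (h : isFirstAt v (j + 1) = false) :
    childV n v j = v.getD (j + 1) 0 ∧ 1 ≤ v.getD (j + 1) 0 ∧ v.getD (j + 1) 0 ≤ n ∧
      j + 1 = secondOcc v (v.getD (j + 1) 0) := by
  have hj1 : j + 1 < 2 * n := by omega
  obtain ⟨h1, h2⟩ := tr_bounds hv hj1
  exact ⟨by simp [childV, h], h1, h2, tr_eq_S_of_not_first hv hj1 h⟩

lemma childV_inj (hv : IsTreeRep n v) (hn : 2 ≤ n) {j1 j2 : ℕ} (hj1 : j1 < 2 * n - 1)
    (hj2 : j2 < 2 * n - 1) (h : childV n v j1 = childV n v j2) : j1 = j2 := by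
  by_cases hf1 : isFirstAt v (j1 + 1) = true <;> by_cases hf2 : isFirstAt v (j2 + 1) = true
  · obtain ⟨hc1, hb1, hb1', hF1⟩ := childV_first hv hn hj1 hf1
    obtain ⟨hc2, hb2, hb2', hF2⟩ := childV_first hv hn hj2 hf2
    rw [hc1, hc2] at h
    have : v.getD (j1 + 1) 0 = v.getD (j2 + 1) 0 := by omega
    rw [this] at hF1
    omega
  · obtain ⟨hc1, hb1, hb1', hF1⟩ := childV_first hv hn hj1 hf1
    obtain ⟨hc2, hb2, hb2', hF2⟩ := childV_second hv hn hj2 (by simpa using hf2)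
    omega
  · obtain ⟨hc1, hb1, hb1', hF1⟩ := childV_second hv hn hj1 (by simpa using hf1)
    obtain ⟨hc2, hb2, hb2', hF2⟩ := childV_first hv hn hj2 hf2
    omega
  · obtain ⟨hc1, hb1, hb1', hF1⟩ := childV_second hv hn hj1 (by simpa using hf1)
    obtain ⟨hc2, hb2, hb2', hF2⟩ := childV_second hv hn hj2 (by simpa using hf2)
    rw [hc1, hc2] at h
    rw [h] at hF1
    omega

lemma edge_spec (hv : IsTreeRep n v) (hn : 2 ≤ n) {j : ℕ} (hj : j < 2 * n - 1) :
    ∃ a, 1 ≤ a ∧ a ≤ n ∧ decodeEdge n v j = s(n + a, childV n v j) ∧ (a = 1 → j = 0) ∧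
      (isFirstAt v (j + 1) = true → firstOcc v a < firstOcc v (v.getD (j + 1) 0)) := by
  have hjlt : j < 2 * n := by omega
  have hj1lt : j + 1 < 2 * n := by omega
  obtain ⟨hx1, hx2⟩ := tr_bounds hv hjlt
  obtain ⟨hy1, hy2⟩ := tr_bounds hv hj1lt
  by_cases hfj : isFirstAt v j = true <;> by_cases hfj1 : isFirstAt v (j + 1) = true
  · -- first, first
    refine ⟨v.getD j 0, hx1, hx2, ?_, ?_, ?_⟩
    · simp [decodeEdge, childV, hfj, hfj1]
    · intro ha
      have := tr_eq_F_of_first hv hjlt hfj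
      rw [ha] at this
      rw [tr_F1 hv (by omega)] at this
      omega
    · intro _
      have h1 := tr_eq_F_of_first hv hjlt hfj
      have h2 := tr_eq_F_of_first hv hj1lt hfj1
      omega
  · -- first, second
    have hfj1' : isFirstAt v (j + 1) = false := by simpa using hfj1
    refine ⟨v.getD j 0, hx1, hx2, ?_, ?_, ?_⟩
    · simp [decodeEdge, childV, hfj, hfj1']
    · intro ha
      have := tr_eq_F_of_first hv hjlt hfj
      rw [ha] at this
      rw [tr_F1 hv (by omega)] at this
      omega
    · intro hc; rw [hc] at hfj1'; simp at hfj1'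
  · -- second, first
    have hfj' : isFirstAt v j = false := by simpa using hfj
    have hjS : j = secondOcc v (v.getD j 0) := tr_eq_S_of_not_first hv hjlt hfj'
    obtain ⟨hd2n, hsInf⟩ := tr_sInf_eq hv hn hj hx1 hx2 hjS hfj1
    refine ⟨v.getD j 0 + 1, by omega, hd2n, ?_, by omega, ?_⟩
    · simp only [decodeEdge, childV, hfj', hfj1]
      simp only [Bool.false_eq_true, if_false, if_true]
      rw [hsInf, tr_getD_S hv (by omega) hd2n]
    · intro _
      have h2 := tr_eq_F_of_first hv hj1lt hfj1
      have h5 : firstOcc v (v.getD j 0 + 1) < secondOcc v (v.getD j 0 + 1 - 1) :=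
        tr_F5 hv (by omega) hd2n
      simp only [Nat.add_sub_cancel] at h5
      omega
  · -- second, second
    have hfj' : isFirstAt v j = false := by simpa using hfj
    have hfj1' : isFirstAt v (j + 1) = false := by simpa using hfj1
    have hjS : j = secondOcc v (v.getD j 0) := tr_eq_S_of_not_first hv hjlt hfj'
    have hj1S : j + 1 = secondOcc v (v.getD (j + 1) 0) := tr_eq_S_of_not_first hv hj1lt hfj1'
    refine ⟨v.getD (j + 1) 0, hy1, hy2, ?_, ?_, ?_⟩
    · simp [decodeEdge, childV, hfj', hfj1']
    · intro ha
      exfalso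
      rw [ha] at hj1S
      rcases Nat.lt_or_ge (v.getD j 0) 2 with hlt | hge
      · have : v.getD j 0 = 1 := by omega
        rw [this] at hjS
        omega
      · have : secondOcc v 1 < secondOcc v (v.getD j 0) :=
          tr_S_mono hv _ hx2 1 le_rfl (by omega)
        omega
    · intro hc; rw [hc] at hfj1'; simp at hfj1'

lemma mem_decodeEdges (hn : 2 ≤ n) {e : Sym2 ℕ} :
    e ∈ decodeEdges n v ↔ ∃ j, j < 2 * n - 1 ∧ decodeEdge n v j = e := by
  simp [decodeEdges, Finset.mem_image, Finset.mem_range]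

lemma adj_of_edge (hn : 2 ≤ n) {j : ℕ} (hj : j < 2 * n - 1) {a c : ℕ}
    (he : decodeEdge n v j = s(a, c)) (hne : a ≠ c) : (decodeGraph n v).Adj a c := by
  rw [decodeGraph, SimpleGraph.fromEdgeSet_adj]
  refine ⟨?_, hne⟩
  rw [Finset.mem_coe, mem_decodeEdges hn]
  exact ⟨j, hj, he⟩

lemma reach (hv : IsTreeRep n v) (hn : 2 ≤ n) :
    ∀ m x, 1 ≤ x → x ≤ 2 * n → (if x ≤ n then 2 * n + 1 else firstOcc v (x - n)) ≤ m →
      (decodeGraph n v).Reachable x (n + 1) := by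
  intro m
  induction m with
  | zero =>
    intro x h1 h2 hm
    by_cases hxn : x ≤ n
    · simp [hxn] at hm
    · simp only [if_neg hxn] at hm
      have hF0 : firstOcc v (x - n) = 0 := by omega
      have hb1 : 1 ≤ x - n := by omega
      have hb2 : x - n ≤ n := by omega
      have hg := tr_getD_F hv hb1 hb2
      rw [hF0, hv.2.2.2.1] at hg
      have : x = n + 1 := by omega
      rw [this]
  | succ m ih =>
    intro x h1 h2 hm
    by_cases hxn : x ≤ n
    · have hS1 : 1 ≤ secondOcc v x := tr_S_pos hv h1 hxn
      have hSn := tr_S_last hv (by omega : 1 ≤ n)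
      have hSub : secondOcc v x ≤ 2 * n - 1 := by
        have := tr_S_mono_le hv h1 hxn le_rfl
        omega
      have hj : secondOcc v x - 1 < 2 * n - 1 := by omega
      have hj1 : secondOcc v x - 1 + 1 = secondOcc v x := by omega
      obtain ⟨a, ha1, ha2, hedge, _, _⟩ := edge_spec hv hn hj
      have hfalse : isFirstAt v (secondOcc v x - 1 + 1) = false := by
        rw [hj1]; exact tr_isFirst_S hv h1 hxn
      obtain ⟨hc, _, _, _⟩ := childV_second hv hn hj hfalse
      have hcx : childV n v (secondOcc v x - 1) = x := by
        rw [hc, hj1, tr_getD_S hv h1 hxn]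
      have hedge' : decodeEdge n v (secondOcc v x - 1) = s(x, n + a) := by
        rw [hedge, hcx, Sym2.eq_swap]
      have hadj := adj_of_edge hn hj hedge' (by omega)
      refine hadj.reachable.trans (ih (n + a) (by omega) (by omega) ?_)
      have hFa : firstOcc v a < 2 * n := tr_F_lt hv ha1 ha2
      rw [if_neg (by omega : ¬ n + a ≤ n)]
      have hna : n + a - n = a := by omega
      rw [hna]
      rw [if_pos hxn] at hm
      omega
    · have hb1 : 1 ≤ x - n := by omega
      have hb2 : x - n ≤ n := by omega
      by_cases hbone : x - n = 1
      · have : x = n + 1 := by omega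
        rw [this]
      · have hbge2 : 2 ≤ x - n := by omega
        have hFpos := tr_F_pos hv hbge2 hb2
        have hFub := tr_F_ub hv hbge2 hb2
        have hj : firstOcc v (x - n) - 1 < 2 * n - 1 := by omega
        have hj1 : firstOcc v (x - n) - 1 + 1 = firstOcc v (x - n) := by omega
        have htrue : isFirstAt v (firstOcc v (x - n) - 1 + 1) = true := by
          rw [hj1]; exact tr_isFirst_F hv hb1 hb2
        obtain ⟨a, ha1, ha2, hedge, _, hFprop⟩ := edge_spec hv hn hj
        obtain ⟨hc, _, _, _⟩ := childV_first hv hn hj htrue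
        have hgb : v.getD (firstOcc v (x - n) - 1 + 1) 0 = x - n := by
          rw [hj1]; exact tr_getD_F hv hb1 hb2
        have hcx : childV n v (firstOcc v (x - n) - 1) = x := by
          rw [hc, hgb]; omega
        have hFab : firstOcc v a < firstOcc v (x - n) := by
          have := hFprop htrue
          rw [hgb] at this
          exact this
        have hedge' : decodeEdge n v (firstOcc v (x - n) - 1) = s(x, n + a) := by
          rw [hedge, hcx, Sym2.eq_swap]
        have hne : x ≠ n + a := by
          intro hxa
          have : a = x - n := by omega
          rw [this] at hFab
          omega
        have hadj := adj_of_edge hn hj hedge' hne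
        refine hadj.reachable.trans (ih (n + a) (by omega) (by omega) ?_)
        rw [if_neg (by omega : ¬ n + a ≤ n)]
        have hna : n + a - n = a := by omega
        rw [hna]
        rw [if_neg hxn] at hm
        omega

end TreeRep

end Aux

/-- For `n ≥ 2` and a tree representation `v` on `{1,…,n}`, the graph `G(v)`
produced by the decoding algorithm, with vertex set `{1,…,2n}`, is a tree: all
its edges join vertices of `{1,…,2n}`, any two vertices of `{1,…,2n}` are
connected, and it has exactly `2n−1` edges; moreover each of the vertices
`1,…,n` and the vertex `n+1` has degree `1`. -/
theorem stmt16 (n : ℕ) (hn : 2 ≤ n) (v : List ℕ) (hv : IsTreeRep n v) :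
    (∀ e ∈ decodeEdges n v, ∀ x ∈ e, x ∈ Finset.Icc 1 (2 * n)) ∧
    (∀ x ∈ Finset.Icc 1 (2 * n), ∀ y ∈ Finset.Icc 1 (2 * n),
      (decodeGraph n v).Reachable x y) ∧
    (decodeEdges n v).card = 2 * n - 1 ∧
    (∀ x ∈ Finset.Icc 1 (n + 1), ((decodeEdges n v).filter fun e => x ∈ e).card = 1) := by
  obtain ⟨hlen, hmem, hcount, h0, h5, h6⟩ := hv
  have hv : IsTreeRep n v := ⟨hlen, hmem, hcount, h0, h5, h6⟩
  refine ⟨?_, ?_, ?_, ?_⟩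
  · -- all edges within Icc 1 (2n)
    intro e he x hxe
    rw [Aux.mem_decodeEdges hn] at he
    obtain ⟨j, hj, he⟩ := he
    obtain ⟨a, ha1, ha2, hedge, _, _⟩ := Aux.edge_spec hv hn hj
    rw [← he, hedge, Sym2.mem_iff] at hxe
    rw [Finset.mem_Icc]
    rcases hxe with rfl | rfl
    · omega
    · by_cases hf : isFirstAt v (j + 1) = true
      · obtain ⟨hc, hb1, hb2, _⟩ := Aux.childV_first hv hn hj hf
        omega
      · obtain ⟨hc, hb1, hb2, _⟩ := Aux.childV_second hv hn hj (by simpa using hf)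
        omega
  · -- connectivity
    intro x hx y hy
    rw [Finset.mem_Icc] at hx hy
    have key : ∀ z, 1 ≤ z → z ≤ 2 * n → (decodeGraph n v).Reachable z (n + 1) := by
      intro z hz1 hz2
      refine Aux.reach hv hn (2 * n + 1) z hz1 hz2 ?_
      by_cases h : z ≤ n
      · rw [if_pos h]
      · rw [if_neg h]
        have := Aux.tr_F_lt hv (show 1 ≤ z - n by omega) (show z - n ≤ n by omega)
        omega
    exact (key x hx.1 hx.2).trans (key y hy.1 hy.2).symm
  · -- number of edges
    rw [decodeEdges, Finset.card_image_of_injOn, Finset.card_range]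
    intro j1 hj1 j2 hj2 he
    rw [Finset.mem_coe, Finset.mem_range] at hj1 hj2
    obtain ⟨a1, ha11, ha12, hedge1, _, hF1⟩ := Aux.edge_spec hv hn hj1
    obtain ⟨a2, ha21, ha22, hedge2, _, hF2⟩ := Aux.edge_spec hv hn hj2
    rw [hedge1, hedge2, Sym2.eq_iff] at he
    rcases he with ⟨h1, h2⟩ | ⟨h1, h2⟩
    · exact Aux.childV_inj hv hn hj1 hj2 h2
    · by_cases hf1 : isFirstAt v (j1 + 1) = true
      · by_cases hf2 : isFirstAt v (j2 + 1) = true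
        · obtain ⟨hc1, hb11, hb12, _⟩ := Aux.childV_first hv hn hj1 hf1
          obtain ⟨hc2, hb21, hb22, _⟩ := Aux.childV_first hv hn hj2 hf2
          have hy1 : v.getD (j1 + 1) 0 = a2 := by omega
          have hy2 : v.getD (j2 + 1) 0 = a1 := by omega
          have hq1 := hF1 hf1
          have hq2 := hF2 hf2
          rw [hy1] at hq1
          rw [hy2] at hq2
          omega
        · obtain ⟨hc2, hb21, hb22, _⟩ := Aux.childV_second hv hn hj2 (by simpa using hf2)
          omega
      · obtain ⟨hc1, hb11, hb12, _⟩ := Aux.childV_second hv hn hj1 (by simpa using hf1)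
        omega
  · -- degrees
    intro x hx
    rw [Finset.mem_Icc] at hx
    by_cases hxn : x ≤ n
    · -- leaf x: unique edge at j = secondOcc v x - 1
      have hx1 : 1 ≤ x := hx.1
      have hS1 : 1 ≤ secondOcc v x := Aux.tr_S_pos hv hx1 hxn
      have hSn := Aux.tr_S_last hv (by omega : 1 ≤ n)
      have hSub : secondOcc v x ≤ 2 * n - 1 := by
        have := Aux.tr_S_mono_le hv hx1 hxn le_rfl
        omega
      have hj : secondOcc v x - 1 < 2 * n - 1 := by omega
      have hj1 : secondOcc v x - 1 + 1 = secondOcc v x := by omega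
      obtain ⟨a, ha1, ha2, hedge, _, _⟩ := Aux.edge_spec hv hn hj
      have hfalse : isFirstAt v (secondOcc v x - 1 + 1) = false := by
        rw [hj1]; exact Aux.tr_isFirst_S hv hx1 hxn
      obtain ⟨hc, _, _, _⟩ := Aux.childV_second hv hn hj hfalse
      have hcx : Aux.childV n v (secondOcc v x - 1) = x := by
        rw [hc, hj1, Aux.tr_getD_S hv hx1 hxn]
      rw [Finset.card_eq_one]
      refine ⟨decodeEdge n v (secondOcc v x - 1), ?_⟩
      rw [Finset.eq_singleton_iff_unique_mem]
      constructor
      · rw [Finset.mem_filter]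
        refine ⟨(Aux.mem_decodeEdges hn).2 ⟨_, hj, rfl⟩, ?_⟩
        rw [hedge, hcx, Sym2.mem_iff]
        right; rfl
      · intro e he
        rw [Finset.mem_filter, Aux.mem_decodeEdges hn] at he
        obtain ⟨⟨j, hjlt, hje⟩, hxe⟩ := he
        obtain ⟨b, hb1, hb2, hedgeb, _, _⟩ := Aux.edge_spec hv hn hjlt
        rw [← hje, hedgeb, Sym2.mem_iff] at hxe
        rcases hxe with hxb | hxc
        · omega
        · by_cases hf : isFirstAt v (j + 1) = true
          · obtain ⟨hcj, hcb1, hcb2, _⟩ := Aux.childV_first hv hn hjlt hf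
            omega
          · obtain ⟨hcj, hcb1, hcb2, hcS⟩ := Aux.childV_second hv hn hjlt (by simpa using hf)
            have hgx : v.getD (j + 1) 0 = x := by omega
            rw [hgx] at hcS
            have : j = secondOcc v x - 1 := by omega
            rw [← hje, this]
    · -- x = n + 1
      have hxeq : x = n + 1 := by omega
      subst hxeq
      have h0lt : (0 : ℕ) < 2 * n - 1 := by omega
      have hfj0 : isFirstAt v 0 = true := by
        rw [Aux.isFirstAt_iff, h0, Aux.tr_F1 hv (by omega : 1 ≤ n)]
      have hedge0 : decodeEdge n v 0 = s(n + 1, Aux.childV n v 0) := by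
        have h0' : v[0]?.getD 0 = 1 := by simpa [List.getD_eq_getElem?_getD] using h0
        by_cases hf1 : isFirstAt v (0 + 1) = true
        · simp [decodeEdge, Aux.childV, hfj0, hf1, h0']
        · simp only [Bool.not_eq_true] at hf1
          simp [decodeEdge, Aux.childV, hfj0, hf1, h0']
      rw [Finset.card_eq_one]
      refine ⟨decodeEdge n v 0, ?_⟩
      rw [Finset.eq_singleton_iff_unique_mem]
      constructor
      · rw [Finset.mem_filter]
        refine ⟨(Aux.mem_decodeEdges hn).2 ⟨_, h0lt, rfl⟩, ?_⟩
        rw [hedge0, Sym2.mem_iff]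
        left; rfl
      · intro e he
        rw [Finset.mem_filter, Aux.mem_decodeEdges hn] at he
        obtain ⟨⟨j, hjlt, hje⟩, hxe⟩ := he
        obtain ⟨b, hb1, hb2, hedgeb, hb0, _⟩ := Aux.edge_spec hv hn hjlt
        rw [← hje, hedgeb, Sym2.mem_iff] at hxe
        rcases hxe with hxb | hxc
        · have : b = 1 := by omega
          have hj0 : j = 0 := hb0 this
          rw [← hje, hj0]
        · exfalso
          by_cases hf : isFirstAt v (j + 1) = true
          · obtain ⟨hcj, hcb1, hcb2, hcF⟩ := Aux.childV_first hv hn hjlt hf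
            have : v.getD (j + 1) 0 = 1 := by omega
            rw [this, Aux.tr_F1 hv (by omega : 1 ≤ n)] at hcF
            omega
          · obtain ⟨hcj, hcb1, hcb2, _⟩ := Aux.childV_second hv hn hjlt (by simpa using hf)
            omega
end

section
/- Let n ≥ 2. The decoding map v ↦ G(v) is injective on the set of tree representations on {1,…,n}: if u and v are tree representations on {1,…,n} with u ≠ v, then the graphs G(u) and G(v) have different edge sets. -/
/- ## generic list lemmas -/

theorem tr17_indexOf_le {x : ℕ} : ∀ (l : List ℕ) (k : ℕ), k < l.length →
    l.getD k 0 = x → l.idxOf x ≤ k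
  | a :: t, 0, _, h => by subst h; simp
  | a :: t, k + 1, hk, h => by
    by_cases hax : a = x
    · simp [hax]
    · rw [List.idxOf_cons_ne _ hax]
      have := tr17_indexOf_le t k (by simpa using Nat.lt_of_succ_lt_succ hk) (by simpa using h)
      omega

theorem tr17_firstOcc_le {v : List ℕ} {x k : ℕ} (hk : k < v.length)
    (h : v.getD k 0 = x) : firstOcc v x ≤ k := tr17_indexOf_le v k hk h

theorem tr17_getD_firstOcc {v : List ℕ} {x : ℕ} (h : x ∈ v) :
    firstOcc v x < v.length ∧ v.getD (firstOcc v x) 0 = x := by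
  have h1 : v.idxOf x < v.length := List.idxOf_lt_length_iff.2 h
  exact ⟨h1, by unfold firstOcc; rw [List.getD_eq_getElem v 0 h1]; exact List.getElem_idxOf h1⟩

theorem tr17_getD_secondOcc {v : List ℕ} {x : ℕ} (h : x ∈ v) :
    secondOcc v x < v.length ∧ v.getD (secondOcc v x) 0 = x := by
  have hrev : x ∈ v.reverse := by simpa using h
  have h1 : v.reverse.idxOf x < v.length := by
    simpa using List.idxOf_lt_length_iff.2 hrev
  have hlen : 0 < v.length := by
    rcases v with _ | _; · simp at h
    · simp
  have h2 : secondOcc v x < v.length := by unfold secondOcc; omega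
  refine ⟨h2, ?_⟩
  have h3 := List.getElem_reverse (l := v) (i := v.reverse.idxOf x)
    (by simpa using h1)
  rw [List.getElem_idxOf (by simpa using h1)] at h3
  rw [List.getD_eq_getElem v 0 h2]
  unfold secondOcc
  exact h3.symm

theorem tr17_le_secondOcc {v : List ℕ} {x k : ℕ} (hk : k < v.length)
    (h : v.getD k 0 = x) : k ≤ secondOcc v x := by
  have hrl : v.reverse.length = v.length := by simp
  have h1 : v.length - 1 - k < v.length := by omega
  have h2 : v.reverse.getD (v.length - 1 - k) 0 = x := by
    rw [List.getD_eq_getElem _ 0 (by omega : v.length - 1 - k < v.reverse.length)]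
    rw [List.getElem_reverse]
    have : v.length - 1 - (v.length - 1 - k) = k := by omega
    simp_rw [this]
    rw [List.getD_eq_getElem v 0 hk] at h; exact h
  have := tr17_indexOf_le v.reverse (v.length - 1 - k) (by omega) h2
  unfold secondOcc; omega

/-- an occurrence strictly inside (firstOcc, secondOcc) would force count ≥ 3 -/
theorem tr17_occ_cases {v : List ℕ} {x k : ℕ} (hc : v.count x = 2)
    (hk : k < v.length) (h : v.getD k 0 = x) :
    k = firstOcc v x ∨ k = secondOcc v x := by
  by_contra hcon
  push_neg at hcon
  obtain ⟨hA, hB⟩ := hcon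
  have hmem : x ∈ v := by
    rw [List.getD_eq_getElem v 0 hk] at h; exact h ▸ List.getElem_mem hk
  have hAk : firstOcc v x < k := lt_of_le_of_ne (tr17_firstOcc_le hk h) (Ne.symm hA)
  have hkB : k < secondOcc v x := lt_of_le_of_ne (tr17_le_secondOcc hk h) hB
  have hsplit : v = v.take k ++ v.drop k := (List.take_append_drop k v).symm
  have hdrop : v.drop k = x :: v.drop (k + 1) := by
    rw [List.drop_eq_getElem_cons hk]
    rw [List.getD_eq_getElem v 0 hk] at h; rw [h]
  have hc1 : 0 < (v.take k).count x := by
    refine List.count_pos_iff.2 ?_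
    have h1 : firstOcc v x < (v.take k).length := by
      simp only [List.length_take]; omega
    have : (v.take k)[firstOcc v x]'h1 = x := by
      rw [List.getElem_take]
      · rw [← List.getD_eq_getElem v 0 (by omega)]
        exact (tr17_getD_firstOcc hmem).2
    exact this ▸ List.getElem_mem h1
  have hB2 := tr17_getD_secondOcc hmem
  have hc2 : 0 < (v.drop (k+1)).count x := by
    refine List.count_pos_iff.2 ?_
    have h1 : secondOcc v x - (k+1) < (v.drop (k+1)).length := by
      simp only [List.length_drop]; omega
    have : (v.drop (k+1))[secondOcc v x - (k+1)]'h1 = x := by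
      rw [List.getElem_drop]
      have he : k + 1 + (secondOcc v x - (k+1)) = secondOcc v x := by omega
      simp_rw [he]
      rw [← List.getD_eq_getElem v 0 hB2.1]; exact hB2.2
    exact this ▸ List.getElem_mem h1
  have : v.count x = (v.take k).count x + ((v.drop k).count x) := by
    conv_lhs => rw [hsplit]
    rw [List.count_append]
  rw [hdrop] at this
  simp only [List.count_cons_self] at this
  omega

theorem tr17_firstOcc_lt_secondOcc {v : List ℕ} {x : ℕ} (hc : v.count x = 2) :
    firstOcc v x < secondOcc v x := by
  have hmem : x ∈ v := by rw [← List.count_pos_iff]; omega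
  have hF := tr17_getD_firstOcc hmem
  have hle := tr17_le_secondOcc hF.1 hF.2
  rcases lt_or_eq_of_le hle with h | h
  · exact h
  -- firstOcc = secondOcc: count would be 1
  exfalso
  set A := firstOcc v x with hAdef
  have hsplit : v = v.take A ++ v.drop A := (List.take_append_drop A v).symm
  have hdrop : v.drop A = x :: v.drop (A + 1) := by
    rw [List.drop_eq_getElem_cons hF.1]
    rw [List.getD_eq_getElem v 0 hF.1] at hF; rw [hF.2]
  have hc1 : (v.take A).count x = 0 := by
    rw [List.count_eq_zero]
    intro hmem'
    obtain ⟨m, hm, hval⟩ := List.mem_iff_getElem.1 hmem'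
    have hmA : m < A := by have := hm; simp only [List.length_take] at this; omega
    rw [List.getElem_take] at hval
    have : v[m]'(by omega) = x := hval
    have := tr17_firstOcc_le (v := v) (x := x) (k := m) (by omega)
      (by rw [List.getD_eq_getElem v 0 (by omega)]; exact this)
    omega
  have hc2 : (v.drop (A+1)).count x = 0 := by
    rw [List.count_eq_zero]
    intro hmem'
    obtain ⟨m, hm, hval⟩ := List.mem_iff_getElem.1 hmem'
    simp only [List.length_drop] at hm
    rw [List.getElem_drop] at hval
    have : v[A + 1 + m]'(by omega) = x := hval
    have := tr17_le_secondOcc (v := v) (x := x) (k := A + 1 + m) (by omega)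
      (by rw [List.getD_eq_getElem v 0 (by omega)]; exact this)
    omega
  have : v.count x = (v.take A).count x + ((v.drop A).count x) := by
    conv_lhs => rw [hsplit]; rw [List.count_append]
  rw [hdrop] at this
  simp only [List.count_cons_self, hc1, hc2] at this
  omega

/- ## tree-rep lemmas -/

/-- token of position `k`: `n + value` for a first occurrence, `value` for a second. -/
def tok17 (n : ℕ) (v : List ℕ) (k : ℕ) : ℕ :=
  if isFirstAt v k then n + v.getD k 0 else v.getD k 0

def pii17 (n x : ℕ) : ℕ := if x ≤ n then n + x + 1 else x

section TR
variable {n : ℕ} {v : List ℕ} (hv : IsTreeRep n v)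

theorem tr17_entry (hv : IsTreeRep n v) {k : ℕ} (hk : k < 2 * n) :
    1 ≤ v.getD k 0 ∧ v.getD k 0 ≤ n ∧ v.getD k 0 ∈ v ∧ v.count (v.getD k 0) = 2 := by
  have hlen := hv.1
  have hmem : v.getD k 0 ∈ v := by
    rw [List.getD_eq_getElem v 0 (by omega)]
    exact List.getElem_mem _
  have hb := hv.2.1 _ hmem
  exact ⟨hb.1, hb.2, hmem, hv.2.2.1 _ hb.1 hb.2⟩

theorem tr17_mem (hv : IsTreeRep n v) {x : ℕ} (h1 : 1 ≤ x) (h2 : x ≤ n) : x ∈ v := by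
  rw [← List.count_pos_iff]
  rw [hv.2.2.1 x h1 h2]; omega

theorem tr17_first_of_first {k : ℕ} (h : isFirstAt v k = true) :
    firstOcc v (v.getD k 0) = k := by
  simpa [isFirstAt, firstOcc] using h

theorem tr17_second_of_not_first (hv : IsTreeRep n v) {k : ℕ} (hk : k < 2 * n)
    (h : isFirstAt v k = false) : secondOcc v (v.getD k 0) = k := by
  have hlen := hv.1
  have he := tr17_entry hv hk
  have hcases := tr17_occ_cases he.2.2.2 (by omega : k < v.length) rfl
  rcases hcases with hc | hc
  · exfalso
    have : isFirstAt v k = true := by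
      unfold firstOcc at hc
      unfold isFirstAt
      simp only [beq_iff_eq]
      omega
    rw [this] at h; exact Bool.noConfusion h
  · omega

theorem tr17_tok_inj (hv : IsTreeRep n v) {k k' : ℕ} (hk : k < 2 * n)
    (hk' : k' < 2 * n) (h : tok17 n v k = tok17 n v k') : k = k' := by
  have he := tr17_entry hv hk
  have he' := tr17_entry hv hk'
  unfold tok17 at h
  by_cases hf : isFirstAt v k = true <;> by_cases hf' : isFirstAt v k' = true <;>
      simp only [hf, hf', Bool.not_eq_true] at h <;>
      simp only [if_pos, if_neg, if_true, if_false, Bool.false_eq_true] at h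
  · have h1 := tr17_first_of_first (v := v) hf
    have h2 := tr17_first_of_first (v := v) hf'
    have hval : v.getD k 0 = v.getD k' 0 := by omega
    rw [← h1, ← h2, hval]
  · omega
  · omega
  · simp only [Bool.not_eq_true] at hf hf'
    have h1 := tr17_second_of_not_first hv hk hf
    have h2 := tr17_second_of_not_first hv hk' hf'
    rw [← h1, ← h2, h]

theorem tr17_second_mono (hv : IsTreeRep n v) {x : ℕ} (h1 : 1 ≤ x) :
    ∀ y, x < y → y ≤ n → secondOcc v x < secondOcc v y := by
  intro y
  induction y with
  | zero => omega
  | succ d ih =>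
    intro hxy hy
    have h2 := hv.2.2.2.2.2 (d+1) (by omega) hy
    simp only [Nat.add_sub_cancel] at h2
    rcases Nat.lt_or_ge x d with h | h
    · exact lt_trans (ih h (by omega)) h2
    · have hxd : x = d := by omega
      rw [hxd]; exact h2

theorem tr17_second_last (hv : IsTreeRep n v) (hn : 1 ≤ n) :
    secondOcc v n = 2 * n - 1 ∧ v.getD (2 * n - 1) 0 = n := by
  have hk : (2 * n - 1) < 2 * n := by omega
  have he := tr17_entry hv hk
  set x := v.getD (2 * n - 1) 0 with hx
  -- the last position is a second occurrence
  have hnotfirst : isFirstAt v (2 * n - 1) = false := by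
    rcases hf : isFirstAt v (2 * n - 1) with _ | _
    · rfl
    · exfalso
      have h1 := tr17_first_of_first (v := v) hf
      rw [← hx] at h1
      have h2 := tr17_firstOcc_lt_secondOcc he.2.2.2
      have h3 := (tr17_getD_secondOcc he.2.2.1).1
      rw [hv.1] at h3
      omega
  have hsx := tr17_second_of_not_first hv hk hnotfirst
  rw [← hx] at hsx
  have hxn : x = n := by
    by_contra hne
    have := tr17_second_mono hv he.1 n (by omega : x < n) le_rfl
    have h3 := (tr17_getD_secondOcc (tr17_mem hv hn le_rfl)).1
    rw [hv.1] at h3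
    omega
  rw [hxn] at hsx
  exact ⟨hsx, hxn⟩

theorem tr17_second_inj (hv : IsTreeRep n v) {x y : ℕ} (h1 : 1 ≤ x) (hx : x ≤ n)
    (h2 : 1 ≤ y) (hy : y ≤ n) (h : secondOcc v x = secondOcc v y) : x = y := by
  rcases Nat.lt_trichotomy x y with hlt | he | hlt
  · have := tr17_second_mono hv h1 y hlt hy; omega
  · exact he
  · have := tr17_second_mono hv h2 x hlt hx; omega

/-- consecutive second occurrences have consecutive values -/
theorem tr17_consec (hv : IsTreeRep n v) {c d : ℕ} (h1 : 1 ≤ c) (hc : c ≤ n)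
    (h2 : 1 ≤ d) (hd : d ≤ n) (h : secondOcc v c + 1 = secondOcc v d) : d = c + 1 := by
  have hcd : c < d := by
    rcases Nat.lt_trichotomy c d with hlt | he | hlt
    · exact hlt
    · exfalso; rw [he] at h; omega
    · have := tr17_second_mono hv h2 c hlt hc; omega
  by_contra hne
  have hd2 : c + 1 < d := by omega
  have ha := tr17_second_mono hv h1 (c+1) (by omega : c < c + 1) (by omega)
  have hb := tr17_second_mono hv (by omega) d hd2 hd
  omega


theorem tr17_not_first_at_second (hv : IsTreeRep n v) {x : ℕ} (h1 : 1 ≤ x) (h2 : x ≤ n) :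
    isFirstAt v (secondOcc v x) = false := by
  have hmem := tr17_mem hv h1 h2
  have hg := tr17_getD_secondOcc hmem
  have hcount := hv.2.2.1 x h1 h2
  rcases hf : isFirstAt v (secondOcc v x) with _ | _
  · rfl
  · exfalso
    have h3 := tr17_first_of_first (v := v) hf
    rw [hg.2] at h3
    have := tr17_firstOcc_lt_secondOcc hcount
    omega

theorem tr17_next_second (hv : IsTreeRep n v) (hn : 1 ≤ n) {j : ℕ} (hj : j < 2 * n - 1)
    (hja : isFirstAt v j = false) (hjb : isFirstAt v (j + 1) = true) :
    v.getD j 0 + 1 ≤ n ∧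
    v.getD (sInf {k | j + 1 < k ∧ k < v.length ∧ isFirstAt v k = false}) 0
      = v.getD j 0 + 1 := by
  have hlen := hv.1
  have he := tr17_entry hv (show j < 2 * n by omega)
  set c := v.getD j 0 with hc
  have hsj : secondOcc v c = j := tr17_second_of_not_first hv (by omega) hja
  have hcn : c < n := by
    by_contra hcon
    have hcn' : c = n := by omega
    have := (tr17_second_last hv hn).1
    rw [hcn'] at hsj; omega
  have hmem1 := tr17_mem hv (show 1 ≤ c + 1 by omega) (by omega)
  have hg := tr17_getD_secondOcc hmem1
  have hnf : isFirstAt v (secondOcc v (c + 1)) = false :=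
    tr17_not_first_at_second hv (by omega) (by omega)
  have hgt : secondOcc v c < secondOcc v (c + 1) :=
    tr17_second_mono hv he.1 (c + 1) (by omega) (by omega)
  have hne1 : secondOcc v (c + 1) ≠ j + 1 := by
    intro hh
    rw [hh] at hnf
    rw [hnf] at hjb
    exact Bool.noConfusion hjb
  have hmemset : secondOcc v (c + 1) ∈
      {k | j + 1 < k ∧ k < v.length ∧ isFirstAt v k = false} :=
    ⟨by omega, hg.1, hnf⟩
  have hlb : ∀ k ∈ {k | j + 1 < k ∧ k < v.length ∧ isFirstAt v k = false},
      secondOcc v (c + 1) ≤ k := by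
    intro k hk
    obtain ⟨hk1, hk2, hk3⟩ := hk
    have hed := tr17_entry hv (show k < 2 * n by omega)
    have hd := tr17_second_of_not_first hv (by omega) hk3
    set d := v.getD k 0 with hdd
    rcases Nat.lt_or_ge c d with h | h
    · rcases Nat.lt_or_ge (c + 1) d with h2 | h2
      · have := tr17_second_mono hv (show 1 ≤ c + 1 by omega) d h2 hed.2.1
        omega
      · have : d = c + 1 := by omega
        rw [← this]; omega
    · exfalso
      rcases Nat.lt_or_ge d c with h2 | h2
      · have := tr17_second_mono hv hed.1 c h2 (by omega)
        omega
      · have : d = c := by omega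
        rw [this] at hd
        omega
  have hinf : sInf {k | j + 1 < k ∧ k < v.length ∧ isFirstAt v k = false}
      = secondOcc v (c + 1) :=
    le_antisymm (Nat.sInf_le hmemset) (le_csInf ⟨_, hmemset⟩ hlb)
  refine ⟨by omega, ?_⟩
  rw [hinf, hg.2]

theorem tr17_decodeEdge (hv : IsTreeRep n v) (hn : 1 ≤ n) {j : ℕ} (hj : j < 2 * n - 1) :
    decodeEdge n v j = s(pii17 n (tok17 n v j), tok17 n v (j + 1)) := by
  have hlen := hv.1
  have hej := tr17_entry hv (show j < 2 * n by omega)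
  have hej1 := tr17_entry hv (show j + 1 < 2 * n by omega)
  unfold decodeEdge tok17 pii17
  by_cases hf : isFirstAt v j = true <;> by_cases hf' : isFirstAt v (j + 1) = true
  · simp only [hf, hf', if_true]
    rw [if_neg (show ¬ (n + v.getD j 0 ≤ n) by omega)]
  · simp only [hf, hf', Bool.false_eq_true, if_true, if_false]
    rw [if_neg (show ¬ (n + v.getD j 0 ≤ n) by omega)]
  · simp only [hf, hf', Bool.false_eq_true, if_true, if_false]
    have hns := tr17_next_second hv hn hj (by simpa using hf) hf'
    rw [hns.2]
    rw [if_pos (show v.getD j 0 ≤ n by omega), Nat.add_assoc]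
  · simp only [hf, hf', Bool.false_eq_true, if_false]
    rw [if_pos (show v.getD j 0 ≤ n by omega)]
    -- SS case: consecutive second occurrences
    have hsj : secondOcc v (v.getD j 0) = j :=
      tr17_second_of_not_first hv (by omega) (by simpa using hf)
    have hsj1 : secondOcc v (v.getD (j + 1) 0) = j + 1 :=
      tr17_second_of_not_first hv (by omega) (by simpa using hf')
    have := tr17_consec hv hej.1 hej.2.1 hej1.1 hej1.2.1 (by omega)
    rw [this, Nat.add_assoc]

end TR

theorem tr17_tok_low (hv : IsTreeRep n v) {k : ℕ} (hk : k < 2 * n)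
    (h : tok17 n v k ≤ n) :
    isFirstAt v k = false ∧ v.getD k 0 = tok17 n v k ∧
      secondOcc v (tok17 n v k) = k ∧ 1 ≤ tok17 n v k := by
  have he := tr17_entry hv hk
  have hf : isFirstAt v k = false := by
    rcases hff : isFirstAt v k with _ | _
    · rfl
    · exfalso; unfold tok17 at h; rw [hff, if_pos rfl] at h; omega
  have hval : v.getD k 0 = tok17 n v k := by
    unfold tok17; rw [hf, if_neg (by simp)]
  have hsec := tr17_second_of_not_first hv hk hf
  rw [hval] at hsec
  exact ⟨hf, hval, hsec, by omega⟩

theorem tr17_tok_high (hv : IsTreeRep n v) {k : ℕ} (hk : k < 2 * n)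
    (h : n < tok17 n v k) :
    isFirstAt v k = true ∧ n + v.getD k 0 = tok17 n v k ∧
      firstOcc v (v.getD k 0) = k := by
  have he := tr17_entry hv hk
  have hf : isFirstAt v k = true := by
    rcases hff : isFirstAt v k with _ | _
    · exfalso; unfold tok17 at h; rw [hff, if_neg (by simp)] at h; omega
    · rfl
  have hval : n + v.getD k 0 = tok17 n v k := by
    unfold tok17; rw [hf, if_pos rfl]
  exact ⟨hf, hval, tr17_first_of_first hf⟩

/-- marks agree on an agreeing suffix -/
theorem tr17_mark_suffix {u : List ℕ} (hu : IsTreeRep n u) (hv : IsTreeRep n v) {p : ℕ}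
    (hagree : ∀ r, p < r → u.getD r 0 = v.getD r 0) {q : ℕ} (hq : p < q) (hq2 : q < 2 * n)
    (h1 : isFirstAt u q = true) : isFirstAt v q = true := by
  by_contra hcon
  have h2 : isFirstAt v q = false := by
    rcases hh : isFirstAt v q with _ | _
    · rfl
    · exact absurd hh hcon
  have hval : u.getD q 0 = v.getD q 0 := hagree q hq
  have heu := tr17_entry hu hq2
  have hfu : firstOcc u (u.getD q 0) = q := tr17_first_of_first h1
  have hsv : secondOcc v (u.getD q 0) = q := by
    rw [hval]; exact tr17_second_of_not_first hv hq2 h2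
  have hsu_lt := tr17_firstOcc_lt_secondOcc heu.2.2.2
  have hsu := tr17_getD_secondOcc heu.2.2.1
  rw [hu.1] at hsu
  have hvq : v.getD (secondOcc u (u.getD q 0)) 0 = u.getD q 0 := by
    rw [← hagree _ (by omega)]; exact hsu.2
  have hcv : v.count (u.getD q 0) = 2 := hv.2.2.1 _ heu.1 heu.2.1
  have hcases := tr17_occ_cases hcv (by rw [hv.1]; omega) hvq
  rcases hcases with hc | hc
  · have := tr17_firstOcc_lt_secondOcc hcv
    omega
  · omega

theorem tr17_tok_suffix {u : List ℕ} (hu : IsTreeRep n u) (hv : IsTreeRep n v) {p : ℕ}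
    (hagree : ∀ r, p < r → u.getD r 0 = v.getD r 0) {q : ℕ} (hq : p < q) (hq2 : q < 2 * n) :
    tok17 n u q = tok17 n v q := by
  have hval : u.getD q 0 = v.getD q 0 := hagree q hq
  have hmark : isFirstAt u q = isFirstAt v q := by
    rcases hh : isFirstAt u q with _ | _
    · rcases hh' : isFirstAt v q with _ | _
      · rfl
      · exfalso
        have := tr17_mark_suffix hv hu (fun r hr => (hagree r hr).symm) hq hq2 hh'
        rw [this] at hh; exact Bool.noConfusion hh
    · exact (tr17_mark_suffix hu hv hagree hq hq2 hh).symm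
  unfold tok17
  rw [hval, hmark]

theorem tr17_tok_ne {u : List ℕ} (hu : IsTreeRep n u) (hv : IsTreeRep n v) {p : ℕ}
    (hp : p < 2 * n) (hdp : u.getD p 0 ≠ v.getD p 0) : tok17 n u p ≠ tok17 n v p := by
  intro h
  have heu := tr17_entry hu hp
  have hev := tr17_entry hv hp
  unfold tok17 at h
  rcases hh : isFirstAt u p with _ | _ <;> rcases hh' : isFirstAt v p with _ | _ <;>
    rw [hh, hh'] at h <;> simp only [Bool.false_eq_true, if_true, if_false] at h <;> omega

/-- `pii` of the token at `p` is never a token at a later position (when token at p is known) -/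
theorem tr17_pii_not_later (hv : IsTreeRep n v) {p m : ℕ} (hp : p < 2 * n)
    (hm : m < 2 * n) (hpm : p < m) : tok17 n v m ≠ pii17 n (tok17 n v p) := by
  intro h
  unfold pii17 at h
  by_cases hb : tok17 n v p ≤ n
  · rw [if_pos hb] at h
    have hlow := tr17_tok_low hv hp hb
    have hhigh : n < tok17 n v m := by omega
    have hh := tr17_tok_high hv hm hhigh
    have hvm : v.getD m 0 = tok17 n v p + 1 := by omega
    have hem := tr17_entry hv hm
    have hcon := hv.2.2.2.2.1 (tok17 n v p + 1) (by omega) (by omega)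
    rw [← hvm, hh.2.2] at hcon
    rw [hvm] at hcon
    have : secondOcc v (tok17 n v p + 1 - 1) = secondOcc v (tok17 n v p) := by
      simp
    rw [this, hlow.2.2.1] at hcon
    omega
  · rw [if_neg hb] at h
    have := tr17_tok_inj hv hm hp h
    omega

/-- the "case C" contradiction: token at `p` is a second occurrence of `c` in `u`
but the first occurrence of `c+1` in `v` -/
theorem tr17_caseC {u : List ℕ} (hu : IsTreeRep n u) (hv : IsTreeRep n v) {p : ℕ}
    (hagree : ∀ r, p < r → u.getD r 0 = v.getD r 0) (hp : p < 2 * n)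
    (h1 : tok17 n u p ≤ n) (h2 : tok17 n v p = n + tok17 n u p + 1) : False := by
  set c := tok17 n u p with hc
  have hlow := tr17_tok_low hu hp h1
  have hhigh := tr17_tok_high hv hp (by omega)
  have hev := tr17_entry hv hp
  have hvp : v.getD p 0 = c + 1 := by omega
  have hfv : firstOcc v (c + 1) = p := by rw [← hvp]; exact hhigh.2.2
  have hcon := hv.2.2.2.2.1 (c + 1) (by omega) (by omega)
  rw [hfv] at hcon
  have hc1 : secondOcc v (c + 1 - 1) = secondOcc v c := by simp
  rw [hc1] at hcon
  -- so secondOcc v c > p; its value is c; transfer to u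
  have hmemc : c ∈ v := tr17_mem hv (by omega) (by omega)
  have hgv := tr17_getD_secondOcc hmemc
  have hguv : u.getD (secondOcc v c) 0 = c := by
    rw [hagree _ hcon]; exact hgv.2
  have hcu : u.count c = 2 := hu.2.2.1 c (by omega) (by omega)
  have hlen : secondOcc v c < u.length := by rw [hu.1, ← hv.1]; exact hgv.1
  have hcases := tr17_occ_cases hcu hlen hguv
  rcases hcases with hcc | hcc
  · have hlt := tr17_firstOcc_lt_secondOcc hcu
    rw [hlow.2.2.1] at hlt
    omega
  · rw [hlow.2.2.1] at hcc
    omega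


/-- For `n ≥ 2`, the decoding map is injective on tree representations on
`{1,…,n}`: distinct tree representations produce graphs with different edge
sets. -/
theorem stmt17 (n : ℕ) (hn : 2 ≤ n) (u v : List ℕ)
    (hu : IsTreeRep n u) (hv : IsTreeRep n v) (hne : u ≠ v) :
    decodeEdges n u ≠ decodeEdges n v := by
  have hn1 : 1 ≤ n := by omega
  intro hEq
  classical
  set D := (Finset.range (2 * n)).filter (fun q => u.getD q 0 ≠ v.getD q 0) with hD
  have hDne : D.Nonempty := by
    by_contra hcon
    apply hne
    apply List.ext_getElem (by rw [hu.1, hv.1])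
    intro i h1 h2
    by_contra hne2
    apply hcon
    refine ⟨i, Finset.mem_filter.2 ⟨Finset.mem_range.2 (by rw [← hu.1]; exact h1), ?_⟩⟩
    rw [List.getD_eq_getElem u 0 h1, List.getD_eq_getElem v 0 h2]
    exact hne2
  set p := D.max' hDne with hp
  have hpmem := D.max'_mem hDne
  have hp2n : p < 2 * n := Finset.mem_range.1 (Finset.mem_filter.1 hpmem).1
  have hdp : u.getD p 0 ≠ v.getD p 0 := (Finset.mem_filter.1 hpmem).2
  have hagree : ∀ r, p < r → u.getD r 0 = v.getD r 0 := by
    intro r hr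
    by_cases hr2 : r < 2 * n
    · by_contra hne2
      have hmem : r ∈ D := Finset.mem_filter.2 ⟨Finset.mem_range.2 hr2, hne2⟩
      have := D.le_max' r hmem
      omega
    · rw [List.getD_eq_default _ _ (by rw [hu.1]; omega),
        List.getD_eq_default _ _ (by rw [hv.1]; omega)]
  have hlast_u := tr17_second_last hu hn1
  have hlast_v := tr17_second_last hv hn1
  have hplt : p < 2 * n - 1 := by
    by_contra hcon
    have hpe : p = 2 * n - 1 := by omega
    rw [hpe, hlast_u.2, hlast_v.2] at hdp
    exact hdp rfl
  have htokne := tr17_tok_ne hu hv hp2n hdp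
  by_cases hpi : pii17 n (tok17 n u p) = pii17 n (tok17 n v p)
  · unfold pii17 at hpi
    by_cases ha : tok17 n u p ≤ n <;> by_cases hb : tok17 n v p ≤ n
    · rw [if_pos ha, if_pos hb] at hpi; exact htokne (by omega)
    · rw [if_pos ha, if_neg hb] at hpi
      exact tr17_caseC hu hv hagree hp2n ha (by omega)
    · rw [if_neg ha, if_pos hb] at hpi
      exact tr17_caseC hv hu (fun r hr => (hagree r hr).symm) hp2n hb (by omega)
    · rw [if_neg ha, if_neg hb] at hpi; exact htokne hpi
  · have hmemv : decodeEdge n v p ∈ decodeEdges n v :=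
      Finset.mem_image.2 ⟨p, Finset.mem_range.2 hplt, rfl⟩
    rw [← hEq] at hmemv
    obtain ⟨j, hjmem, hjedge⟩ := Finset.mem_image.1 hmemv
    have hjlt : j < 2 * n - 1 := Finset.mem_range.1 hjmem
    rw [tr17_decodeEdge hu hn1 hjlt, tr17_decodeEdge hv hn1 hplt] at hjedge
    have hw : tok17 n u (p + 1) = tok17 n v (p + 1) :=
      tr17_tok_suffix hu hv hagree (by omega) (by omega)
    rw [Sym2.eq_iff] at hjedge
    rcases hjedge with ⟨h1, h2⟩ | ⟨h1, h2⟩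
    · rw [← hw] at h2
      have hj1 : j + 1 = p + 1 := tr17_tok_inj hu (by omega) (by omega) h2
      have hjp : j = p := by omega
      rw [hjp] at h1
      exact hpi h1
    · rw [← hw] at h1
      by_cases hcn : tok17 n u j ≤ n
      · have hlow := tr17_tok_low hu (show j < 2 * n by omega) hcn
        unfold pii17 at h1
        rw [if_pos hcn] at h1
        have hhigh := tr17_tok_high hu (show p + 1 < 2 * n by omega) (by omega)
        have hval : u.getD (p + 1) 0 = tok17 n u j + 1 := by omega
        have hep1 := tr17_entry hu (show p + 1 < 2 * n by omega)
        have hcon := hu.2.2.2.2.1 (tok17 n u j + 1) (by omega) (by omega)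
        have hE : secondOcc u (tok17 n u j + 1 - 1) = secondOcc u (tok17 n u j) := by simp
        rw [hE, hlow.2.2.1] at hcon
        rw [hval] at hhigh
        have hfp : firstOcc u (tok17 n u j + 1) = p + 1 := hhigh.2.2
        have hpj : p + 1 < j := by omega
        have htk : tok17 n u (j + 1) = tok17 n v (j + 1) :=
          tr17_tok_suffix hu hv hagree (by omega) (by omega)
        exact tr17_pii_not_later (m := j + 1) hv hp2n (by omega) (by omega)
          (by rw [← htk]; exact h2)
      · unfold pii17 at h1
        rw [if_neg hcn] at h1
        have hj1 : j = p + 1 := tr17_tok_inj hu (by omega) (by omega) h1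
        rw [hj1] at h2
        have htk : tok17 n u (p + 2) = tok17 n v (p + 2) :=
          tr17_tok_suffix hu hv hagree (by omega) (by omega)
        exact tr17_pii_not_later (m := p + 2) hv hp2n (by omega) (by omega)
          (by rw [← htk]; exact h2)
end
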